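/- arXiv:2103.02977 — 7 statements merged into one kernel-verified Lean document; each statement's English description precedes it below -/
import Mathlib

section
/- Let X be a T3 space and D a closed upper semi-continuous decomposition of X. If (A_n) is a sequence of decomposition elements and A ∈ D satisfies A ∩ liminf A_n ≠ ∅, then limsup A_n ⊆ A. -/
open Filter

/-- Let `X` be a T3 space and `s` a closed upper semi-continuous decomposition of `X`.
If `(A n)` is a sequence of decomposition elements (classes of the points `a n`) and
the class `A` of `x` meets `liminf A_n`, then `limsup A_n ⊆ A`. -/
theorem limsup_subset_of_closed_usc {X : Type*} [TopologicalSpace X] [T3Space X]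
    (s : Setoid X)
    (hclosed : ∀ x : X, IsClosed {y : X | s.r x y})
    (husc : ∀ x : X, ∀ U : Set X, IsOpen U → {y : X | s.r x y} ⊆ U →
      ∃ V : Set X, IsOpen V ∧ {y : X | s.r x y} ⊆ V ∧ V ⊆ U ∧
        ∀ z : X, ({y : X | s.r z y} ∩ V).Nonempty → {y : X | s.r z y} ⊆ U)
    (a : ℕ → X) (x : X)
    (hmeet : ({y : X | s.r x y} ∩
      {p : X | ∀ U ∈ nhds p, ∀ᶠ n in atTop, (U ∩ {y : X | s.r (a n) y}).Nonempty}).Nonempty) :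
    {p : X | ∀ U ∈ nhds p, ∃ᶠ n in atTop, (U ∩ {y : X | s.r (a n) y}).Nonempty}
      ⊆ {y : X | s.r x y} := by
  obtain ⟨q, hqA, hqlim⟩ := hmeet
  intro p hp
  by_contra hpx
  -- separate p from the closed class of x
  have hAc : IsClosed {y : X | s.r x y} := hclosed x
  have hdisj : Disjoint (nhdsSet {y : X | s.r x y}) (nhds p) := by
    rw [disjoint_nhdsSet_nhds, hAc.closure_eq]
    exact hpx
  obtain ⟨U, hU, W, hW, hUW⟩ := Filter.disjoint_iff.mp hdisj
  obtain ⟨U', hU'open, hAU', hU'U⟩ := mem_nhdsSet_iff_exists.mp hU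
  obtain ⟨V, hVopen, hAV, hVU', hVprop⟩ := husc x U' hU'open hAU'
  -- q ∈ liminf, V is an open neighborhood of q
  have hVq : V ∈ nhds q := hVopen.mem_nhds (hAV hqA)
  have hev : ∀ᶠ n in atTop, (V ∩ {y : X | s.r (a n) y}).Nonempty := hqlim V hVq
  have hfr : ∃ᶠ n in atTop, (W ∩ {y : X | s.r (a n) y}).Nonempty := hp W hW
  obtain ⟨n, hn1, hn2⟩ := (hfr.and_eventually hev).exists
  obtain ⟨w, hwW, hwA⟩ := hn1
  have : {y : X | s.r (a n) y} ⊆ U' := by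
    refine hVprop (a n) ?_
    obtain ⟨v, hvV, hvA⟩ := hn2
    exact ⟨v, hvA, hvV⟩
  exact Set.disjoint_iff.mp hUW ⟨hU'U (this hwA), hwW⟩ |>.elim
end

section
/- If D is a decomposition of a metric space all of whose elements are closed and which is null (all elements bounded and for every ε > 0 only finitely many elements have diameter greater than ε), then D is upper semi-continuous (in particular, for every element A and neighborhood U of A there is a neighborhood V ⊆ U of A such that every element meeting V lies in U). -/
/-- Classes of a setoid are equal when they intersect. -/
lemma setoid_class_eq {X : Type*} (s : Setoid X) {z x y : X}
    (h1 : s.r z y) (h2 : s.r x y) : {w : X | s.r z w} = {w : X | s.r x w} := by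
  ext w
  constructor
  · intro hw; exact s.trans h2 (s.trans (s.symm h1) hw)
  · intro hw; exact s.trans h1 (s.trans (s.symm h2) hw)

/-- A null decomposition (all elements bounded, and for every `ε > 0` only finitely
many elements have diameter greater than `ε`) of a (proper) metric space with all
elements closed is upper semi-continuous: the elements are compact, and every
neighborhood `U` of an element contains a neighborhood `V` of that element such that
every element meeting `V` lies in `U`. -/
theorem null_decomposition_usc {X : Type*} [MetricSpace X] [ProperSpace X]
    (s : Setoid X)
    (hclosed : ∀ x : X, IsClosed {y : X | s.r x y})
    (hbdd : ∀ x : X, Bornology.IsBounded {y : X | s.r x y})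
    (hnull : ∀ ε : ℝ, 0 < ε →
      {A : Set X | (∃ x : X, A = {y : X | s.r x y}) ∧ ε < Metric.diam A}.Finite) :
    (∀ x : X, IsCompact {y : X | s.r x y}) ∧
    ∀ x : X, ∀ U : Set X, IsOpen U → {y : X | s.r x y} ⊆ U →
      ∃ V : Set X, IsOpen V ∧ {y : X | s.r x y} ⊆ V ∧ V ⊆ U ∧
        ∀ z : X, ({y : X | s.r z y} ∩ V).Nonempty → {y : X | s.r z y} ⊆ U := by
  have hcpt : ∀ x : X, IsCompact {y : X | s.r x y} := fun x =>
    Metric.isCompact_of_isClosed_isBounded (hclosed x) (hbdd x)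
  refine ⟨hcpt, fun x U hU hAU => ?_⟩
  set A := {y : X | s.r x y} with hAdef
  obtain ⟨ε, hε, hthick⟩ := (hcpt x).exists_thickening_subset_open hU hAU
  have hε2 : (0:ℝ) < ε / 2 := by linarith
  -- big classes not contained in U
  set F : Set (Set X) :=
    {B | (∃ z : X, B = {y : X | s.r z y}) ∧ ε / 2 < Metric.diam B ∧ ¬ B ⊆ U} with hFdef
  have hFfin : F.Finite := (hnull (ε/2) hε2).subset (fun B hB => ⟨hB.1, hB.2.1⟩)
  have hFclosed : IsClosed (⋃ B ∈ F, B) := by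
    refine hFfin.isClosed_biUnion ?_
    rintro B ⟨⟨z, rfl⟩, -⟩
    exact hclosed z
  set V : Set X := Metric.thickening (ε/2) A \ (⋃ B ∈ F, B) with hVdef
  have hVopen : IsOpen V := Metric.isOpen_thickening.sdiff hFclosed
  have hthick2 : Metric.thickening (ε/2) A ⊆ U :=
    (Metric.thickening_mono (by linarith) A).trans hthick
  refine ⟨V, hVopen, ?_, fun y hy => hthick2 hy.1, ?_⟩
  · intro y hy
    refine ⟨Metric.self_subset_thickening hε2 A hy, ?_⟩
    simp only [Set.mem_iUnion, not_exists]
    rintro B ⟨⟨z, rfl⟩, -, hBU⟩ hyB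
    exact hBU (by rw [setoid_class_eq s hyB hy]; exact hAU)
  · rintro z ⟨b, hbz, hbV⟩
    by_cases hd : Metric.diam {y : X | s.r z y} ≤ ε / 2
    · intro y hy
      apply hthick
      apply (Metric.mem_thickening_iff_infDist_lt (⟨x, s.refl x⟩ : A.Nonempty)).2
      have h1 : Metric.infDist b A < ε / 2 :=
        (Metric.mem_thickening_iff_infDist_lt ⟨x, s.refl x⟩).1 hbV.1
      have h2 : dist y b ≤ Metric.diam {y : X | s.r z y} :=
        Metric.dist_le_diam_of_mem (hbdd z) hy hbz
      calc Metric.infDist y A ≤ Metric.infDist b A + dist y b :=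
            Metric.infDist_le_infDist_add_dist
        _ < ε := by linarith
    · by_contra hzU
      exact hbV.2 (Set.mem_biUnion ⟨⟨z, rfl⟩, lt_of_not_ge hd, hzU⟩ hbz)
end

section
/- Let D be an upper semi-continuous decomposition of a Hausdorff space X. Then the decomposition D' whose elements are the connected components of the elements of D is a monotone upper semi-continuous decomposition. -/
open Set

/-- In a compact Hausdorff space, any open set containing a connected component
contains a clopen set containing that component. -/
lemma exists_isClopen_between {K : Type*} [TopologicalSpace K] [CompactSpace K] [T2Space K]
    {x : K} {U : Set K} (hU : IsOpen U) (h : connectedComponent x ⊆ U) :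
    ∃ Z : Set K, IsClopen Z ∧ connectedComponent x ⊆ Z ∧ Z ⊆ U := by
  let N := { Z : Set K // IsClopen Z ∧ x ∈ Z }
  haveI : Nonempty N := ⟨⟨univ, isClopen_univ, mem_univ x⟩⟩
  have hdir : Directed ((· ⊇ ·) : Set K → Set K → Prop) fun Z : N => Z.val := by
    rintro ⟨A, hA, hxA⟩ ⟨B, hB, hxB⟩
    exact ⟨⟨A ∩ B, hA.inter hB, ⟨hxA, hxB⟩⟩, inter_subset_left, inter_subset_right⟩
  have hiInter : (⋂ Z : N, Z.val) = connectedComponent x :=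
    (connectedComponent_eq_iInter_isClopen x).symm
  have h_nhd : ∀ y ∈ ⋂ Z : N, Z.val, U ∈ nhds y := by
    intro y hy
    exact hU.mem_nhds (h (hiInter ▸ hy))
  obtain ⟨⟨Z, hZ, hxZ⟩, hZU⟩ :=
    exists_subset_nhds_of_compactSpace hdir (fun Z : N => Z.property.1.1) h_nhd
  exact ⟨Z, hZ, hZ.connectedComponent_subset hxZ, hZU⟩

/-- Let `s` be an upper semi-continuous decomposition of a Hausdorff space `X`.
Then the decomposition `D'` whose elements are the connected components of the
elements of `s` (the component of `x` being `connectedComponentIn` of the class of `x`)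
is a monotone upper semi-continuous decomposition: its elements are connected,
compact, closed, and satisfy the usc saturation property. -/
theorem components_decomposition_monotone_usc {X : Type*} [TopologicalSpace X]
    [T2Space X] (s : Setoid X)
    (hcompact : ∀ x : X, IsCompact {y : X | s.r x y})
    (hclosed : ∀ x : X, IsClosed {y : X | s.r x y})
    (husc : ∀ x : X, ∀ U : Set X, IsOpen U → {y : X | s.r x y} ⊆ U →
      ∃ V : Set X, IsOpen V ∧ {y : X | s.r x y} ⊆ V ∧ V ⊆ U ∧
        ∀ z : X, ({y : X | s.r z y} ∩ V).Nonempty → {y : X | s.r z y} ⊆ U) :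
    (∀ x : X, IsConnected (connectedComponentIn {y : X | s.r x y} x)) ∧
    (∀ x : X, IsCompact (connectedComponentIn {y : X | s.r x y} x)) ∧
    (∀ x : X, IsClosed (connectedComponentIn {y : X | s.r x y} x)) ∧
    (∀ x : X, ∀ U : Set X, IsOpen U → connectedComponentIn {y : X | s.r x y} x ⊆ U →
      ∃ V : Set X, IsOpen V ∧ connectedComponentIn {y : X | s.r x y} x ⊆ V ∧ V ⊆ U ∧
        ∀ z : X, (connectedComponentIn {y : X | s.r z y} z ∩ V).Nonempty →
          connectedComponentIn {y : X | s.r z y} z ⊆ U) := by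
  have hmem : ∀ x : X, x ∈ {y : X | s.r x y} := fun x => s.refl x
  -- closedness of components
  have hcl : ∀ x : X, IsClosed (connectedComponentIn {y : X | s.r x y} x) := by
    intro x
    rw [connectedComponentIn_eq_image (hmem x)]
    exact ((hclosed x).isClosedEmbedding_subtypeVal.isClosed_iff_image_isClosed).1
      isClosed_connectedComponent
  refine ⟨fun x => isConnected_connectedComponentIn_iff.2 (hmem x),
    fun x => (hcompact x).of_isClosed_subset (hcl x) (connectedComponentIn_subset _ _),
    hcl, ?_⟩
  intro x U hU hCU
  set K := {y : X | s.r x y} with hK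
  haveI : CompactSpace K := isCompact_iff_compactSpace.1 (hcompact x)
  -- move to the subtype
  have hximg : connectedComponentIn K x = Subtype.val '' connectedComponent (⟨x, hmem x⟩ : K) :=
    connectedComponentIn_eq_image (hmem x)
  have hcomp_sub : connectedComponent (⟨x, hmem x⟩ : K) ⊆ Subtype.val ⁻¹' U := by
    intro y hy
    exact hCU (hximg ▸ mem_image_of_mem _ hy)
  obtain ⟨Z, hZ, hCZ, hZU⟩ := exists_isClopen_between (hU.preimage continuous_subtype_val) hcomp_sub
  -- the two compact pieces of K
  have hA : IsCompact (Subtype.val '' Z) :=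
    (hZ.1.isCompact).image continuous_subtype_val
  have hB : IsCompact (Subtype.val '' Zᶜ) :=
    ((hZ.compl).1.isCompact).image continuous_subtype_val
  have hdisj : Disjoint (Subtype.val '' Z) (Subtype.val '' Zᶜ) :=
    (disjoint_compl_right).image (Subtype.val_injective.injOn) (subset_univ _) (subset_univ _)
  obtain ⟨W₁, W₂, hW₁, hW₂, hAW₁, hBW₂, hWd⟩ := SeparatedNhds.of_isCompact_isCompact hA hB hdisj
  -- shrink W₁ into U
  have hAU : Subtype.val '' Z ⊆ U := by
    rintro _ ⟨y, hy, rfl⟩; exact hZU hy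
  set W₁' := W₁ ∩ U with hW₁'
  have hW₁'o : IsOpen W₁' := hW₁.inter hU
  have hAW₁' : Subtype.val '' Z ⊆ W₁' := fun y hy => ⟨hAW₁ hy, hAU hy⟩
  have hWd' : Disjoint W₁' W₂ := hWd.mono_left inter_subset_left
  -- K is covered
  have hKcov : K ⊆ W₁' ∪ W₂ := by
    intro y hy
    by_cases hyZ : (⟨y, hy⟩ : K) ∈ Z
    · exact Or.inl (hAW₁' ⟨⟨y, hy⟩, hyZ, rfl⟩)
    · exact Or.inr (hBW₂ ⟨⟨y, hy⟩, hyZ, rfl⟩)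
  obtain ⟨V, hVo, hKV, hVsub, hVsat⟩ := husc x (W₁' ∪ W₂) (hW₁'o.union hW₂) hKcov
  refine ⟨V ∩ W₁', hVo.inter hW₁'o, ?_, fun y hy => hy.2.2, ?_⟩
  · intro y hy
    have hyK : y ∈ K := connectedComponentIn_subset _ _ hy
    have hyA : y ∈ Subtype.val '' Z := by
      rcases hximg ▸ hy with ⟨w, hw, rfl⟩
      exact ⟨w, hCZ hw, rfl⟩
    exact ⟨hKV hyK, hAW₁' hyA⟩
  · intro z hz
    have hzV : ({y : X | s.r z y} ∩ V).Nonempty := by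
      obtain ⟨w, hw₁, hw₂⟩ := hz
      exact ⟨w, connectedComponentIn_subset _ _ hw₁, hw₂.1⟩
    have hclass : {y : X | s.r z y} ⊆ W₁' ∪ W₂ := hVsat z hzV
    have hsub : connectedComponentIn {y : X | s.r z y} z ⊆ W₁' ∪ W₂ :=
      (connectedComponentIn_subset _ _).trans hclass
    have hmeet : (connectedComponentIn {y : X | s.r z y} z ∩ W₁').Nonempty := by
      obtain ⟨w, hw₁, hw₂⟩ := hz
      exact ⟨w, hw₁, hw₂.2⟩
    have := (isPreconnected_connectedComponentIn).subset_left_of_subset_union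
      hW₁'o hW₂ hWd' hsub hmeet
    exact this.trans inter_subset_right
end

section
/- For every compact metric space Y there exists a monotone upper semi-continuous decomposition of the closed 3-ball D^3 such that Y embeds into the decomposition space. -/
open Set Topology Metric Filter

namespace USCDecomp

/-- remainder sequence for binary expansion -/
noncomputable def binRem (r : ℝ) : ℕ → ℝ
  | 0 => r
  | n+1 => 2 * binRem r n - (if 1/2 ≤ binRem r n then 1 else 0)

lemma binRem_mem {r : ℝ} (h : r ∈ Icc (0:ℝ) 1) : ∀ n, binRem r n ∈ Icc (0:ℝ) 1 := by
  intro n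
  induction n with
  | zero => exact h
  | succ n ih =>
    obtain ⟨h0, h1⟩ := ih
    simp only [binRem]
    split_ifs with hle
    · constructor <;> [linarith; linarith]
    · push_neg at hle
      constructor <;> [linarith; linarith]

lemma cantor_partial_sum (r : ℝ) (h : r ∈ Icc (0:ℝ) 1) (N : ℕ) :
    ∑ n ∈ Finset.range N,
      Cardinal.cantorFunctionAux (1/2) (fun k => decide ((1:ℝ)/2 ≤ binRem r k)) n
      = 2 * r - 2 * binRem r N * (1/2) ^ N := by
  induction N with
  | zero => simp [binRem]
  | succ N ih =>
    rw [Finset.sum_range_succ, ih]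
    have : binRem r (N+1) = 2 * binRem r N - (if 1/2 ≤ binRem r N then 1 else 0) := rfl
    rw [this]
    by_cases hle : (1:ℝ)/2 ≤ binRem r N
    · rw [Cardinal.cantorFunctionAux_true (by simpa using hle)]
      simp only [if_pos hle]
      ring
    · rw [Cardinal.cantorFunctionAux_false (by simpa using hle)]
      simp only [if_neg hle]
      ring

lemma exists_cantor_preimage {r : ℝ} (h : r ∈ Icc (0:ℝ) 1) :
    ∃ f : ℕ → Bool, Cardinal.cantorFunction (1/2) f = 2 * r := by
  refine ⟨fun k => decide ((1:ℝ)/2 ≤ binRem r k), ?_⟩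
  have hsum : Summable (Cardinal.cantorFunctionAux (1/2)
      (fun k => decide ((1:ℝ)/2 ≤ binRem r k))) :=
    Cardinal.summable_cantor_function _ (by norm_num) (by norm_num)
  have : HasSum (Cardinal.cantorFunctionAux (1/2)
      (fun k => decide ((1:ℝ)/2 ≤ binRem r k))) (2 * r) := by
    rw [hsum.hasSum_iff_tendsto_nat]
    have h2 : Tendsto (fun N : ℕ => 2 * binRem r N * (1/2:ℝ) ^ N) atTop (𝓝 0) := by
      apply squeeze_zero (g := fun N => 2 * (1/2:ℝ)^N)
      · intro N
        have := (binRem_mem h N).1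
        positivity
      · intro N
        have h1 := (binRem_mem h N).2
        have hp : (0:ℝ) ≤ (1/2:ℝ)^N := by positivity
        nlinarith
      · simpa using (tendsto_pow_atTop_nhds_zero_of_lt_one (by norm_num : (0:ℝ) ≤ 1/2)
          (by norm_num)).const_mul (2:ℝ)
    have := (tendsto_const_nhds (x := 2*r) (f := atTop (α := ℕ))).sub h2
    simp only [sub_zero] at this
    apply this.congr
    intro N
    exact (cantor_partial_sum r h N).symm
  exact this.tsum_eq

lemma continuous_cantorFunction {c : ℝ} (h0 : 0 ≤ c) (h1 : c < 1) :
    Continuous (Cardinal.cantorFunction c) := by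
  apply continuous_tsum (u := fun n => c ^ n)
    (f := fun n x => Cardinal.cantorFunctionAux c x n)
  · intro i
    exact (continuous_of_discreteTopology (f := fun b : Bool => cond b (c^i) 0)).comp
      (continuous_apply i)
  · exact summable_geometric_of_lt_one h0 h1
  · intro n x
    rw [Real.norm_eq_abs, abs_le]
    constructor
    · have := Cardinal.cantorFunctionAux_nonneg (f := x) (n := n) h0
      have : (0:ℝ) ≤ c ^ n := by positivity
      linarith [Cardinal.cantorFunctionAux_nonneg (f := x) (n := n) h0]
    · cases hx : x n
      · rw [Cardinal.cantorFunctionAux_false hx]; positivity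
      · rw [Cardinal.cantorFunctionAux_true hx]

lemma cantorFunction_mem {c : ℝ} (h0 : 0 ≤ c) (h1 : c < 1) (f : ℕ → Bool) :
    Cardinal.cantorFunction c f ∈ Icc (0:ℝ) (1/(1-c)) := by
  have hsum := Cardinal.summable_cantor_function f h0 h1
  constructor
  · exact tsum_nonneg fun n => Cardinal.cantorFunctionAux_nonneg h0
  · have := Summable.tsum_le_tsum (f := Cardinal.cantorFunctionAux c f) (g := fun n => c ^ n)
      (fun n => ?_) hsum (summable_geometric_of_lt_one h0 h1)
    · rw [tsum_geometric_of_lt_one h0 h1] at this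
      rw [one_div]
      exact this
    · cases hx : f n
      · rw [Cardinal.cantorFunctionAux_false hx]; positivity
      · rw [Cardinal.cantorFunctionAux_true hx]

end USCDecomp

namespace USCDecomp

open Set Topology Metric Filter

lemma exists_compact_param (Y : Type) [MetricSpace Y] [CompactSpace Y] [Nonempty Y] :
    ∃ (K : Set ℝ) (σ : ℝ → Y), IsCompact K ∧ K ⊆ Icc (0:ℝ) 1 ∧
      ContinuousOn σ K ∧ ∀ y, ∃ a ∈ K, σ a = y := by
  classical
  obtain ⟨u, hu⟩ := TopologicalSpace.exists_dense_seq Y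
  -- the injective continuous map into [0,1]^ℕ
  set ι : Y → ℕ → ℝ := fun y n => min (dist y (u n)) 1 with hι
  have ιcont : Continuous ι :=
    continuous_pi fun n => (continuous_id.dist continuous_const).min continuous_const
  have ιmem : ∀ y n, ι y n ∈ Icc (0:ℝ) 1 :=
    fun y n => ⟨le_min dist_nonneg zero_le_one, min_le_right _ _⟩
  have ιinj : Function.Injective ι := by
    intro y y' hyy'
    by_contra hne
    have hd : 0 < dist y y' := dist_pos.mpr hne
    set ε : ℝ := min (dist y y') 1 with hε
    have hε0 : 0 < ε := lt_min hd one_pos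
    obtain ⟨n, hn⟩ := hu.exists_dist_lt y (half_pos hε0)
    have hε1 : ε ≤ 1 := min_le_right _ _
    have h1 : dist y (u n) < 1 := lt_of_lt_of_le hn (by linarith)
    have e1 : ι y n = dist y (u n) := min_eq_left h1.le
    have e2 : ι y' n = min (dist y' (u n)) 1 := rfl
    have : ι y' n = ι y n := by rw [hyy']
    rw [e1, e2] at this
    have hy' : dist y' (u n) < ε/2 := by
      rcases le_or_gt (dist y' (u n)) 1 with hc | hc
      · rw [min_eq_left hc] at this; rw [this]; exact hn
      · rw [min_eq_right hc.le] at this; linarith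
    have : dist y y' < ε := by
      calc dist y y' ≤ dist y (u n) + dist y' (u n) := dist_triangle_right _ _ _
        _ < ε/2 + ε/2 := by exact add_lt_add hn hy'
        _ = ε := by ring
    have : dist y y' < dist y y' := lt_of_lt_of_le this (min_le_left _ _)
    exact lt_irrefl _ this
  -- Cantor space on ℕ × ℕ
  set Q : ((ℕ × ℕ) → Bool) → ℕ → ℝ :=
    fun g n => Cardinal.cantorFunction (1/2) (fun m => g (n, m)) / 2 with hQ
  have Qcont : Continuous Q := by
    apply continuous_pi
    intro n
    exact ((continuous_cantorFunction (by norm_num) (by norm_num)).comp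
      (continuous_pi fun m => continuous_apply (n, m))).div_const 2
  set P : Set ((ℕ × ℕ) → Bool) := Q ⁻¹' (range ι) with hP
  have Pclosed : IsClosed P :=
    ((isCompact_range ιcont).isClosed).preimage Qcont
  have Pcompact : IsCompact P := Pclosed.isCompact
  set τ : ((ℕ × ℕ) → Bool) → Y := fun g =>
    if h : Q g ∈ range ι then h.choose else Classical.arbitrary Y with hτ
  have τspec : ∀ g ∈ P, ι (τ g) = Q g := by
    intro g hg
    have hg' : Q g ∈ range ι := hg
    simp only [hτ, dif_pos hg']
    exact hg'.choose_spec
  have τsurj : ∀ y : Y, ∃ g ∈ P, τ g = y := by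
    intro y
    have : ∀ n, ∃ f : ℕ → Bool, Cardinal.cantorFunction (1/2) f = 2 * ι y n :=
      fun n => exists_cantor_preimage (ιmem y n)
    choose F hF using this
    have hQg : Q (fun p => F p.1 p.2) = ι y := by
      funext n
      show Cardinal.cantorFunction (1/2) (fun m => F n m) / 2 = ι y n
      rw [show (fun m => F n m) = F n from rfl, hF n]; ring
    have hmem : (fun p : ℕ × ℕ => F p.1 p.2) ∈ P := by
      show Q (fun p : ℕ × ℕ => F p.1 p.2) ∈ range ι
      rw [hQg]
      exact ⟨y, rfl⟩
    refine ⟨fun p => F p.1 p.2, hmem, ?_⟩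
    apply ιinj
    rw [τspec _ hmem, hQg]
  -- the embedding of Cantor space into [0,1]
  set E : ℕ ≃ ℕ × ℕ := (Denumerable.eqv (ℕ × ℕ)).symm with hE
  set e : ((ℕ × ℕ) → Bool) → ℝ :=
    fun g => Cardinal.cantorFunction (1/3) (fun n => g (E n)) / 2 with he
  have econt : Continuous e :=
    ((continuous_cantorFunction (by norm_num) (by norm_num)).comp
      (continuous_pi fun n => continuous_apply (E n))).div_const 2
  have einj : Function.Injective e := by
    intro g g' hgg'
    have heq : Cardinal.cantorFunction (1/3) (fun n => g (E n))
        = Cardinal.cantorFunction (1/3) (fun n => g' (E n)) := by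
      have h' : Cardinal.cantorFunction (1/3) (fun n => g (E n)) / 2
          = Cardinal.cantorFunction (1/3) (fun n => g' (E n)) / 2 := hgg'
      linarith
    have hfun := Cardinal.cantorFunction_injective (by norm_num) (by norm_num) heq
    funext p
    have := congrFun hfun (E.symm p)
    simpa using this
  have emem : ∀ g, e g ∈ Icc (0:ℝ) 1 := by
    intro g
    have := cantorFunction_mem (c := 1/3) (by norm_num) (by norm_num) (fun n => g (E n))
    obtain ⟨h0, h1⟩ := this
    rw [show (1:ℝ)/(1-1/3) = 3/2 by norm_num] at h1
    have h2 : e g = Cardinal.cantorFunction (1/3) (fun n => g (E n)) / 2 := rfl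
    rw [h2]
    constructor
    · linarith
    · linarith
  refine ⟨e '' P, fun x => if h : ∃ g ∈ P, e g = x then τ h.choose else Classical.arbitrary Y,
    Pcompact.image econt, ?_, ?_, ?_⟩
  · rintro x ⟨g, -, rfl⟩; exact emem g
  · -- continuity on K
    set σ : ℝ → Y := fun x => if h : ∃ g ∈ P, e g = x then τ h.choose
      else Classical.arbitrary Y with hσ
    have σspec : ∀ g ∈ P, σ (e g) = τ g := by
      intro g hg
      have hex : ∃ g' ∈ P, e g' = e g := ⟨g, hg, rfl⟩
      simp only [hσ, dif_pos hex]
      obtain ⟨-, h2⟩ := hex.choose_spec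
      rw [einj h2]
    haveI : CompactSpace P := isCompact_iff_compactSpace.mp Pcompact
    -- homeomorphism P ≃ₜ e '' P
    set eP : P → (e '' P : Set ℝ) := fun p => ⟨e p, mem_image_of_mem e p.2⟩ with heP
    have ePcont : Continuous eP := (econt.comp continuous_subtype_val).subtype_mk _
    have ePbij : Function.Bijective eP := by
      constructor
      · intro p q hpq
        exact Subtype.ext (einj (congrArg Subtype.val hpq))
      · rintro ⟨x, g, hg, rfl⟩
        exact ⟨⟨g, hg⟩, rfl⟩
    set homeo : P ≃ₜ (e '' P : Set ℝ) :=
      Continuous.homeoOfEquivCompactToT2 (f := Equiv.ofBijective eP ePbij) ePcont with hhom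
    -- τ restricted to P is continuous
    have ιemb : Topology.IsInducing ι := (ιcont.isClosedEmbedding ιinj).isEmbedding.isInducing
    have τPcont : Continuous (fun p : P => τ p.1) := by
      rw [ιemb.continuous_iff]
      have : (ι ∘ fun p : P => τ p.1) = fun p : P => Q p.1 := by
        funext p
        exact τspec p.1 p.2
      rw [this]
      exact Qcont.comp continuous_subtype_val
    rw [continuousOn_iff_continuous_restrict]
    have : (e '' P).domRestrict σ = (fun p : P => τ p.1) ∘ homeo.symm := by
      funext k
      have h1 : eP (homeo.symm k) = k := homeo.apply_symm_apply k
      have h2 : e ((homeo.symm k) : ((ℕ×ℕ) → Bool)) = (k : ℝ) := congrArg Subtype.val h1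
      show σ (k : ℝ) = τ (homeo.symm k : ((ℕ×ℕ) → Bool))
      rw [← h2]
      exact σspec _ (homeo.symm k).2
    rw [this]
    exact τPcont.comp homeo.symm.continuous
  · intro y
    obtain ⟨g, hg, hgy⟩ := τsurj y
    refine ⟨e g, mem_image_of_mem e hg, ?_⟩
    have hex : ∃ g' ∈ P, e g' = e g := ⟨g, hg, rfl⟩
    simp only [dif_pos hex]
    obtain ⟨-, h2⟩ := hex.choose_spec
    rw [einj h2, hgy]

end USCDecomp

namespace USCDecomp

open Set Topology Metric Filter

lemma abstract_decomp {X : Type} [TopologicalSpace X] [CompactSpace X] [T2Space X]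
    (Y : Type) [TopologicalSpace Y] [T2Space Y]
    (T : Set X) (π : X → Y) (hT : IsCompact T) (hπ : ContinuousOn π T)
    (hfib : ∀ y, IsConnected {x | x ∈ T ∧ π x = y}) :
    ∃ s : Setoid X, (∀ x, IsConnected {y | s.r x y}) ∧ (∀ x, IsCompact {y | s.r x y}) ∧
      IsClosedMap (Quotient.mk s) ∧ ∃ f : Y → Quotient s, Topology.IsEmbedding f := by
  set rel : X → X → Prop := fun x x' => x = x' ∨ (x ∈ T ∧ x' ∈ T ∧ π x = π x') with hrel
  have hequiv : Equivalence rel := by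
    constructor
    · intro x; exact Or.inl rfl
    · rintro x y (rfl | ⟨h1, h2, h3⟩)
      · exact Or.inl rfl
      · exact Or.inr ⟨h2, h1, h3.symm⟩
    · rintro x y z (rfl | ⟨h1, h2, h3⟩) (rfl | ⟨h4, h5, h6⟩)
      · exact Or.inl rfl
      · exact Or.inr ⟨h4, h5, h6⟩
      · exact Or.inr ⟨h1, h2, h3⟩
      · exact Or.inr ⟨h1, h5, h3.trans h6⟩
  set s : Setoid X := ⟨rel, hequiv⟩ with hs
  have hq : IsQuotientMap (Quotient.mk s) := isQuotientMap_quotient_mk'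
  -- fibers are closed
  have hfibclosed : ∀ y, IsClosed {x | x ∈ T ∧ π x = y} := by
    intro y
    have : {x | x ∈ T ∧ π x = y} = T ∩ π ⁻¹' {y} := by ext x; simp
    rw [this]
    exact hπ.preimage_isClosed_of_isClosed hT.isClosed isClosed_singleton
  -- description of classes
  have hclassT : ∀ x ∈ T, {y | s.r x y} = {x' | x' ∈ T ∧ π x' = π x} := by
    intro x hx
    ext x'
    constructor
    · rintro (rfl | ⟨h1, h2, h3⟩)
      · exact ⟨hx, rfl⟩
      · exact ⟨h2, h3.symm⟩
    · rintro ⟨h1, h2⟩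
      exact Or.inr ⟨hx, h1, h2.symm⟩
  have hclassN : ∀ x, x ∉ T → {y | s.r x y} = {x} := by
    intro x hx
    ext x'
    constructor
    · rintro (rfl | ⟨h1, h2, h3⟩)
      · exact rfl
      · exact absurd h1 hx
    · rintro rfl
      exact Or.inl rfl
  -- saturation formula
  have hsat : ∀ F : Set X, (Quotient.mk s) ⁻¹' (Quotient.mk s '' F)
      = F ∪ (T ∩ π ⁻¹' (π '' (T ∩ F))) := by
    intro F
    ext x
    simp only [mem_preimage, mem_image, mem_union, mem_inter_iff]
    constructor
    · rintro ⟨x', hx', hxx'⟩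
      have hr : rel x' x := Quotient.exact hxx'
      rcases hr with rfl | ⟨h1, h2, h3⟩
      · exact Or.inl hx'
      · exact Or.inr ⟨h2, x', ⟨h1, hx'⟩, h3⟩
    · rintro (hx | ⟨hxT, x', ⟨hx'T, hx'F⟩, hπ'⟩)
      · exact ⟨x, hx, rfl⟩
      · exact ⟨x', hx'F, Quotient.sound (Or.inr ⟨hx'T, hxT, hπ'⟩)⟩
  have himgclosed : ∀ C : Set Y, IsClosed C → IsClosed (T ∩ π ⁻¹' C) := by
    intro C hC
    exact hπ.preimage_isClosed_of_isClosed hT.isClosed hC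
  refine ⟨s, ?_, ?_, ?_, ?_⟩
  · intro x
    by_cases hx : x ∈ T
    · rw [hclassT x hx]; exact hfib (π x)
    · rw [hclassN x hx]; exact isConnected_singleton
  · intro x
    by_cases hx : x ∈ T
    · rw [hclassT x hx]; exact (hfibclosed (π x)).isCompact
    · rw [hclassN x hx]; exact isCompact_singleton
  · intro F hF
    rw [← hq.isClosed_preimage, hsat F]
    refine hF.union (himgclosed _ ?_)
    exact (((hT.inter_right hF).image_of_continuousOn
      (hπ.mono inter_subset_left)).isClosed)
  · -- the embedding
    have hne : ∀ y, ∃ x, x ∈ T ∧ π x = y := fun y => (hfib y).nonempty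
    choose c hcT hcπ using hne
    set f : Y → Quotient s := fun y => Quotient.mk s (c y) with hf
    have finj : Function.Injective f := by
      intro y y' hyy'
      have hr : rel (c y) (c y') := Quotient.exact hyy'
      rcases hr with heq | ⟨-, -, h3⟩
      · rw [← hcπ y, ← hcπ y', heq]
      · rw [← hcπ y, ← hcπ y', h3]
    have fcont : Continuous f := by
      rw [continuous_iff_isClosed]
      intro D hD
      have hpre : f ⁻¹' D = π '' (T ∩ (Quotient.mk s) ⁻¹' D) := by
        ext y
        simp only [mem_preimage, mem_image, mem_inter_iff]
        constructor
        · intro hy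
          exact ⟨c y, ⟨hcT y, hy⟩, hcπ y⟩
        · rintro ⟨x, ⟨hxT, hxD⟩, hπx⟩
          have : f y = Quotient.mk s x :=
            Quotient.sound (Or.inr ⟨hcT y, hxT, (hcπ y).trans hπx.symm⟩)
          rw [hf] at this ⊢
          rw [this]
          exact hxD
      rw [hpre]
      exact (((hT.inter_right (hD.preimage hq.continuous)).image_of_continuousOn
        (hπ.mono inter_subset_left)).isClosed)
    have fclosed : IsClosedMap f := by
      intro C hC
      rw [← hq.isClosed_preimage]
      have : (Quotient.mk s) ⁻¹' (f '' C) = T ∩ π ⁻¹' C := by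
        ext x
        simp only [mem_preimage, mem_image, mem_inter_iff]
        constructor
        · rintro ⟨y, hy, hxy⟩
          have hr : rel (c y) x := Quotient.exact hxy
          rcases hr with heq | ⟨-, h2, h3⟩
          · rw [← heq]
            exact ⟨hcT y, by rw [hcπ y]; exact hy⟩
          · exact ⟨h2, by rw [← h3, hcπ y]; exact hy⟩
        · rintro ⟨hxT, hxC⟩
          refine ⟨π x, hxC, Quotient.sound (Or.inr ⟨hcT (π x), hxT, hcπ (π x)⟩)⟩
      rw [this]
      exact himgclosed C hC
    exact ⟨f, (IsClosedEmbedding.of_continuous_injective_isClosedMap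
      fcont finj fclosed).isEmbedding⟩

end USCDecomp

namespace USCDecomp

open Set Topology Metric Filter

noncomputable def Phi (a b l : ℝ) : EuclideanSpace ℝ (Fin 3) :=
  (WithLp.equiv 2 (Fin 3 → ℝ)).symm ![(1-l)*a/2, l*b/2, l/2]

lemma Phi_cont : Continuous fun p : ℝ × ℝ × ℝ => Phi p.1 p.2.1 p.2.2 := by
  apply (PiLp.continuous_toLp 2 (fun _ : Fin 3 => ℝ)).comp
  apply continuous_pi
  intro i
  fin_cases i <;> simp <;> fun_prop

lemma Phi_mem (a b l : ℝ) (ha : a ∈ Icc (0:ℝ) 1) (hb : b ∈ Icc (0:ℝ) 1)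
    (hl : l ∈ Icc (0:ℝ) 1) :
    Phi a b l ∈ Metric.closedBall (0 : EuclideanSpace ℝ (Fin 3)) 1 := by
  rw [mem_closedBall_zero_iff, EuclideanSpace.norm_eq, Fin.sum_univ_three]
  have h0 : Phi a b l 0 = (1-l)*a/2 := rfl
  have h1 : Phi a b l 1 = l*b/2 := rfl
  have h2 : Phi a b l 2 = l/2 := rfl
  rw [h0, h1, h2, Real.sqrt_le_one]
  obtain ⟨ha0, ha1⟩ := ha; obtain ⟨hb0, hb1⟩ := hb; obtain ⟨hl0, hl1⟩ := hl
  simp only [Real.norm_eq_abs, sq_abs]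
  have hu0 : 0 ≤ (1-l)*a := mul_nonneg (by linarith) ha0
  have hu1 : (1-l)*a ≤ 1 := by nlinarith
  have hv0 : 0 ≤ l*b := mul_nonneg hl0 hb0
  have hv1 : l*b ≤ 1 := by nlinarith
  have e1 : ((1-l)*a/2)^2 ≤ 1/4 := by nlinarith
  have e2 : (l*b/2)^2 ≤ 1/4 := by nlinarith
  have e3 : (l/2)^2 ≤ 1/4 := by nlinarith
  linarith

lemma Phi_apply0 (a b l : ℝ) : Phi a b l 0 = (1-l)*a/2 := rfl
lemma Phi_apply1 (a b l : ℝ) : Phi a b l 1 = l*b/2 := rfl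
lemma Phi_apply2 (a b l : ℝ) : Phi a b l 2 = l/2 := rfl

lemma Phi_zero (a b b' : ℝ) : Phi a b 0 = Phi a b' 0 := by
  unfold Phi
  congr 1
  funext i
  fin_cases i <;> norm_num

lemma Phi_one (a a' b : ℝ) : Phi a b 1 = Phi a' b 1 := by
  unfold Phi
  congr 1
  funext i
  fin_cases i <;> norm_num

end USCDecomp

/-- For every compact metric space `Y` there exists a monotone upper semi-continuous
decomposition of the closed 3-ball (all elements connected and compact, and the
quotient map closed) such that `Y` embeds into the decomposition space. -/
theorem exists_monotone_usc_decomposition_embedding (Y : Type) [MetricSpace Y]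
    [CompactSpace Y] :
    ∃ s : Setoid (Metric.closedBall (0 : EuclideanSpace ℝ (Fin 3)) 1),
      (∀ x, IsConnected {y | s.r x y}) ∧
      (∀ x, IsCompact {y | s.r x y}) ∧
      IsClosedMap (Quotient.mk s) ∧
      ∃ f : Y → Quotient s, Topology.IsEmbedding f := by
  classical
  open Set Topology Metric USCDecomp in
  by_cases hY : Nonempty Y
  · obtain ⟨K, σ, hK, hK1, hσc, hσs⟩ := USCDecomp.exists_compact_param Y
    set E3 := EuclideanSpace ℝ (Fin 3)
    set D : Set E3 := Metric.closedBall (0 : E3) 1 with hD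
    haveI : CompactSpace ↥D := isCompact_iff_compactSpace.mp (isCompact_closedBall _ _)
    haveI : CompactSpace ↥K := isCompact_iff_compactSpace.mp hK
    haveI : CompactSpace ↥(Set.Icc (0:ℝ) 1) := isCompact_iff_compactSpace.mp isCompact_Icc
    set Ψ : ↥K × ↥K × ↥(Set.Icc (0:ℝ) 1) → ↥D := fun q =>
      ⟨Phi q.1 q.2.1 q.2.2,
        Phi_mem _ _ _ (hK1 q.1.2) (hK1 q.2.1.2) q.2.2.2⟩ with hΨ
    have Ψcont : Continuous Ψ := by
      apply Continuous.subtype_mk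
      exact Phi_cont.comp ((continuous_subtype_val.comp continuous_fst).prodMk
        ((continuous_subtype_val.comp (continuous_fst.comp continuous_snd)).prodMk
          (continuous_subtype_val.comp (continuous_snd.comp continuous_snd))))
    set W : Set (↥K × ↥K × ↥(Set.Icc (0:ℝ) 1)) := {q | σ q.1 = σ q.2.1} with hW
    have σKcont : Continuous (fun a : ↥K => σ a) := continuousOn_iff_continuous_restrict.mp hσc
    have Wclosed : IsClosed W :=
      isClosed_eq (σKcont.comp continuous_fst) (σKcont.comp (continuous_fst.comp continuous_snd))
    set T : Set ↥D := Ψ '' W with hT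
    have hTcomp : IsCompact T := Wclosed.isCompact.image Ψcont
    set A : ↥D → ℝ := fun x => (x : E3) 0 / (1/2 - (x : E3) 2) with hA
    set B : ↥D → ℝ := fun x => (x : E3) 1 / (x : E3) 2 with hB
    set π : ↥D → Y := fun x => if (x : E3) 2 < 1/4 then σ (A x) else σ (B x) with hπ
    have coordcont : ∀ i, Continuous fun x : ↥D => (x : E3) i := by
      intro i
      exact ((continuous_apply i).comp (PiLp.continuous_ofLp 2 (fun _ : Fin 3 => ℝ))).comp
        continuous_subtype_val
    -- coordinate values
    have hc0 : ∀ (a b : ↥K) (l : ↥(Set.Icc (0:ℝ) 1)),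
        ((Ψ (a,b,l) : E3)) 0 = (1 - (l:ℝ)) * (a:ℝ) / 2 := fun _ _ _ => rfl
    have hc1 : ∀ (a b : ↥K) (l : ↥(Set.Icc (0:ℝ) 1)),
        ((Ψ (a,b,l) : E3)) 1 = (l:ℝ) * (b:ℝ) / 2 := fun _ _ _ => rfl
    have hc2 : ∀ (a b : ↥K) (l : ↥(Set.Icc (0:ℝ) 1)),
        ((Ψ (a,b,l) : E3)) 2 = (l:ℝ) / 2 := fun _ _ _ => rfl
    -- A and B recover the parameters
    have hAval : ∀ (a b : ↥K) (l : ↥(Set.Icc (0:ℝ) 1)), (l:ℝ) < 1 → A (Ψ (a,b,l)) = a := by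
      intro a b l hl
      show ((1 - (l:ℝ)) * (a:ℝ) / 2) / (1/2 - (l:ℝ)/2) = (a:ℝ)
      have hne : (1:ℝ) - (l:ℝ) ≠ 0 := by linarith
      rw [show (1:ℝ)/2 - (l:ℝ)/2 = (1 - (l:ℝ))/2 by ring]
      field_simp
    have hBval : ∀ (a b : ↥K) (l : ↥(Set.Icc (0:ℝ) 1)), 0 < (l:ℝ) → B (Ψ (a,b,l)) = b := by
      intro a b l hl
      show ((l:ℝ) * (b:ℝ) / 2) / ((l:ℝ)/2) = (b:ℝ)
      have hne : (l:ℝ) ≠ 0 := ne_of_gt hl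
      field_simp
    -- value of π on T
    have hπΨ : ∀ q ∈ W, π (Ψ q) = σ q.1 := by
      rintro ⟨a, b, l⟩ hq
      have hql : σ (a:ℝ) = σ (b:ℝ) := hq
      have hl0 : (0:ℝ) ≤ l := l.2.1
      have hl1 : (l:ℝ) ≤ 1 := l.2.2
      show π (Ψ (a,b,l)) = σ (a:ℝ)
      have hite : π (Ψ (a,b,l)) = if ((Ψ (a,b,l) : E3)) 2 < 1/4 then σ (A (Ψ (a,b,l)))
          else σ (B (Ψ (a,b,l))) := rfl
      by_cases hl : ((Ψ (a,b,l) : E3)) 2 < 1/4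
      · rw [hite, if_pos hl]
        have : (l:ℝ) < 1 := by rw [hc2] at hl; linarith
        rw [hAval a b l this]
      · rw [hite, if_neg hl]
        have : 0 < (l:ℝ) := by rw [hc2] at hl; push_neg at hl; linarith
        rw [hBval a b l this, ← hql]
    -- continuity of π on T
    have hπcont : ContinuousOn π T := by
      have hAcont : ContinuousOn A {x : ↥D | (x : E3) 2 < 1/3} := by
        apply ContinuousOn.div (coordcont 0).continuousOn
          (continuous_const.sub (coordcont 2)).continuousOn
        intro x hx
        simp only [mem_setOf_eq] at hx
        intro hc
        have : (x : E3) 2 = 1/2 := by have hc' : (1:ℝ)/2 - (x : E3) 2 = 0 := hc; linarith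
        rw [this] at hx; norm_num at hx
      have hBcont : ContinuousOn B {x : ↥D | 1/5 < (x : E3) 2} := by
        apply ContinuousOn.div (coordcont 1).continuousOn (coordcont 2).continuousOn
        intro x hx
        simp only [mem_setOf_eq] at hx
        intro hc
        rw [hc] at hx; norm_num at hx
      have hU : IsOpen {x : ↥D | (x : E3) 2 < 1/3} := isOpen_lt (coordcont 2) continuous_const
      have hV : IsOpen {x : ↥D | 1/5 < (x : E3) 2} := isOpen_lt continuous_const (coordcont 2)
      -- on T ∩ U, π agrees with σ ∘ A
      have hg1 : ContinuousOn (fun x => σ (A x)) (T ∩ {x : ↥D | (x : E3) 2 < 1/3}) := by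
        apply ContinuousOn.comp hσc (hAcont.mono inter_subset_right)
        rintro x ⟨⟨⟨a, b, l⟩, hqW, rfl⟩, hxU⟩
        have hl : (l:ℝ) < 1 := by
          have := hxU; simp only [Set.mem_setOf_eq, hc2, USCDecomp.Phi_apply2] at this; linarith
        rw [hAval a b l hl]
        exact a.2
      have hg2 : ContinuousOn (fun x => σ (B x)) (T ∩ {x : ↥D | 1/5 < (x : E3) 2}) := by
        apply ContinuousOn.comp hσc (hBcont.mono inter_subset_right)
        rintro x ⟨⟨⟨a, b, l⟩, hqW, rfl⟩, hxV⟩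
        have hl : 0 < (l:ℝ) := by
          have := hxV; simp only [Set.mem_setOf_eq, hc2, USCDecomp.Phi_apply2] at this; linarith
        rw [hBval a b l hl]
        exact b.2
      have hag1 : ∀ x ∈ T ∩ {x : ↥D | (x : E3) 2 < 1/3}, π x = σ (A x) := by
        rintro x ⟨⟨⟨a, b, l⟩, hqW, rfl⟩, hxU⟩
        have hql : σ (a:ℝ) = σ (b:ℝ) := hqW
        simp only [Set.mem_setOf_eq, hc2, USCDecomp.Phi_apply2] at hxU
        have hl1 : (l:ℝ) < 1 := by linarith
        have hite : π (Ψ (a,b,l)) = if ((Ψ (a,b,l) : E3)) 2 < 1/4 then σ (A (Ψ (a,b,l)))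
            else σ (B (Ψ (a,b,l))) := rfl
        by_cases hl : ((Ψ (a,b,l) : E3)) 2 < 1/4
        · rw [hite, if_pos hl]
        · rw [hite, if_neg hl]
          have h0 : 0 < (l:ℝ) := by rw [hc2] at hl; push_neg at hl; linarith
          rw [hBval a b l h0, hAval a b l hl1, ← hql]
      have hag2 : ∀ x ∈ T ∩ {x : ↥D | 1/5 < (x : E3) 2}, π x = σ (B x) := by
        rintro x ⟨⟨⟨a, b, l⟩, hqW, rfl⟩, hxV⟩
        have hql : σ (a:ℝ) = σ (b:ℝ) := hqW
        simp only [Set.mem_setOf_eq, hc2, USCDecomp.Phi_apply2] at hxV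
        have hl0 : 0 < (l:ℝ) := by linarith
        have hite : π (Ψ (a,b,l)) = if ((Ψ (a,b,l) : E3)) 2 < 1/4 then σ (A (Ψ (a,b,l)))
            else σ (B (Ψ (a,b,l))) := rfl
        by_cases hl : ((Ψ (a,b,l) : E3)) 2 < 1/4
        · rw [hite, if_pos hl]
          have hl1 : (l:ℝ) < 1 := by rw [hc2] at hl; linarith
          rw [hBval a b l hl0, hAval a b l hl1, hql]
        · rw [hite, if_neg hl]
      intro x hx
      rcases lt_or_ge ((x : E3) 2) (1/3) with hcase | hcase
      · have h1 : ContinuousWithinAt π (T ∩ {x : ↥D | (x : E3) 2 < 1/3}) x :=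
          ((hg1 x ⟨hx, hcase⟩).congr hag1 (hag1 x ⟨hx, hcase⟩))
        exact h1.mono_of_mem_nhdsWithin (inter_mem_nhdsWithin T (hU.mem_nhds hcase))
      · have hxV : x ∈ {x : ↥D | 1/5 < (x : E3) 2} := by
          simp only [mem_setOf_eq]; linarith
        have h1 : ContinuousWithinAt π (T ∩ {x : ↥D | 1/5 < (x : E3) 2}) x :=
          ((hg2 x ⟨hx, hxV⟩).congr hag2 (hag2 x ⟨hx, hxV⟩))
        exact h1.mono_of_mem_nhdsWithin (inter_mem_nhdsWithin T (hV.mem_nhds hxV))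
    -- connectedness of fibers
    have hfib : ∀ y, IsConnected {x | x ∈ T ∧ π x = y} := by
      intro y
      obtain ⟨a₀r, ha₀K, ha₀y⟩ := hσs y
      set a₀ : ↥K := ⟨a₀r, ha₀K⟩ with ha₀
      set l₀ : ↥(Set.Icc (0:ℝ) 1) := ⟨0, le_refl 0, zero_le_one⟩ with hl₀
      set l₁ : ↥(Set.Icc (0:ℝ) 1) := ⟨1, zero_le_one, le_refl 1⟩ with hl₁
      set seg : ↥K → ↥K → Set ↥D :=
        fun a b => Set.range fun l : ↥(Set.Icc (0:ℝ) 1) => Ψ (a, b, l) with hseg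
      set Ky : Set ↥K := {a | σ (a:ℝ) = y} with hKy
      have ha₀Ky : a₀ ∈ Ky := ha₀y
      have hsegconn : ∀ (a b : ↥K), IsConnected (seg a b) := by
        intro a b
        haveI : ConnectedSpace ↥(Set.Icc (0:ℝ) 1) :=
          Subtype.connectedSpace ⟨⟨0, le_refl 0, zero_le_one⟩, isPreconnected_Icc⟩
        exact isConnected_range (Ψcont.comp (by fun_prop))
      have hsegsub : ∀ a ∈ Ky, ∀ b ∈ Ky, seg a b ⊆ {x | x ∈ T ∧ π x = y} := by
        rintro a ha b hb x ⟨l, rfl⟩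
        have hqW : ((a, b, l) : ↥K × ↥K × ↥(Set.Icc (0:ℝ) 1)) ∈ W := by
          show σ (a:ℝ) = σ (b:ℝ)
          rw [ha, hb]
        exact ⟨Set.mem_image_of_mem Ψ hqW, (hπΨ _ hqW).trans ha⟩
      set Uab : ↥K → ↥K → Set ↥D :=
        fun a b => (seg a b ∪ seg a a₀) ∪ seg a₀ a₀ with hUab
      have hzero : ∀ (a b b' : ↥K), Ψ (a, b, l₀) = Ψ (a, b', l₀) :=
        fun a b b' => Subtype.ext (Phi_zero _ _ _)
      have hone : ∀ (a a' b : ↥K), Ψ (a, b, l₁) = Ψ (a', b, l₁) :=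
        fun a a' b => Subtype.ext (Phi_one _ _ _)
      have hUconn : ∀ a b : ↥K, IsConnected (Uab a b) := by
        intro a b
        refine IsConnected.union ?_ (IsConnected.union ?_ (hsegconn a b) (hsegconn a a₀))
          (hsegconn a₀ a₀)
        · exact ⟨Ψ (a, a₀, l₁), Or.inr ⟨l₁, rfl⟩, ⟨l₁, (hone a₀ a a₀).symm ▸ rfl⟩⟩
        · exact ⟨Ψ (a, b, l₀), ⟨l₀, rfl⟩, ⟨l₀, hzero a a₀ b⟩⟩
      set p₀ : ↥D := Ψ (a₀, a₀, l₀) with hp₀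
      have hp₀U : ∀ a b : ↥K, p₀ ∈ Uab a b := fun a b => Or.inr ⟨l₀, rfl⟩
      have hUsub : ∀ a ∈ Ky, ∀ b ∈ Ky, Uab a b ⊆ {x | x ∈ T ∧ π x = y} := by
        intro a ha b hb
        exact Set.union_subset (Set.union_subset (hsegsub a ha b hb) (hsegsub a ha a₀ ha₀Ky))
          (hsegsub a₀ ha₀Ky a₀ ha₀Ky)
      set cc : Set (Set ↥D) := {S | ∃ a ∈ Ky, ∃ b ∈ Ky, S = Uab a b} with hcc
      have hfibeq : {x | x ∈ T ∧ π x = y} = ⋃₀ cc := by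
        ext x
        constructor
        · rintro ⟨⟨⟨a, b, l⟩, hqW, rfl⟩, hπx⟩
          have hql : σ (a:ℝ) = σ (b:ℝ) := hqW
          have haKy : a ∈ Ky := by
            show σ (a:ℝ) = y
            rw [← hπΨ _ hqW]; exact hπx
          have hbKy : b ∈ Ky := by
            show σ (b:ℝ) = y
            rw [← hql, ← hπΨ _ hqW]; exact hπx
          exact ⟨Uab a b, ⟨a, haKy, b, hbKy, rfl⟩, Or.inl (Or.inl ⟨l, rfl⟩)⟩
        · rintro ⟨S, ⟨a, ha, b, hb, rfl⟩, hxS⟩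
          exact hUsub a ha b hb hxS
      constructor
      · exact ⟨p₀, hsegsub a₀ ha₀Ky a₀ ha₀Ky ⟨l₀, rfl⟩⟩
      · rw [hfibeq]
        apply isPreconnected_sUnion p₀ cc
        · rintro S ⟨a, -, b, -, rfl⟩
          exact hp₀U a b
        · rintro S ⟨a, -, b, -, rfl⟩
          exact (hUconn a b).isPreconnected
    exact USCDecomp.abstract_decomp Y T π hTcomp hπcont hfib
  · -- Y is empty
    haveI : IsEmpty Y := not_nonempty_iff.mp hY
    set s : Setoid ↥(Metric.closedBall (0 : EuclideanSpace ℝ (Fin 3)) 1) :=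
      ⟨Eq, eq_equivalence⟩ with hs
    have hclass : ∀ x, {y | s.r x y} = {x} := by
      intro x
      ext y
      constructor
      · intro h; exact (show x = y from h).symm
      · intro h; exact (show y = x from h).symm
    refine ⟨s, ?_, ?_, ?_, ?_⟩
    · intro x; rw [hclass x]; exact isConnected_singleton
    · intro x; rw [hclass x]; exact isCompact_singleton
    · intro F hF
      have hq : IsQuotientMap (Quotient.mk s) := isQuotientMap_quotient_mk'
      rw [← hq.isClosed_preimage]
      have : (Quotient.mk s) ⁻¹' (Quotient.mk s '' F) = F := by
        ext x
        simp only [Set.mem_preimage, Set.mem_image]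
        constructor
        · rintro ⟨x', hx', hxx'⟩
          have : x' = x := Quotient.exact hxx'
          rwa [← this]
        · intro hx; exact ⟨x, hx, rfl⟩
      rwa [this]
    · exact ⟨fun y => isEmptyElim y, Topology.IsEmbedding.of_subsingleton _⟩
end

section
/- If C is a compact cell-like set in a metric space X and e: C → Y is an embedding into an absolute neighborhood retract Y, then e(C) is cell-like in Y. -/
universe u

/-- A compact subset `C` of a topological space is *cell-like* if for every neighborhood
`U` of `C` there is a neighborhood `V ⊆ U` of `C` such that the inclusion `V → U` is
null-homotopic in `U`. -/
def CellLike {X : Type*} [TopologicalSpace X] (C : Set X) : Prop :=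
  IsCompact C ∧ ∀ U : Set X, IsOpen U → C ⊆ U →
    ∃ V : Set X, IsOpen V ∧ C ⊆ V ∧ ∃ hVU : V ⊆ U, ∃ c : U,
      ContinuousMap.Homotopic
        ⟨Set.inclusion hVU, continuous_inclusion hVU⟩
        (ContinuousMap.const V c)

/-- A metric space `Y` is an *absolute neighborhood retract* if for every metric space
`Z`, closed subset `A ⊆ Z` and continuous map `f : A → Y`, `f` extends continuously
over some neighborhood of `A` in `Z`. -/
def IsANR (Y : Type u) [MetricSpace Y] : Prop :=
  ∀ (Z : Type u) (_ : MetricSpace Z) (A : Set Z), IsClosed A → ∀ f : C(A, Y),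
    ∃ U : Set Z, IsOpen U ∧ A ⊆ U ∧ ∃ g : C(U, Y),
      ∀ (a : Z) (ha : a ∈ A) (haU : a ∈ U), g ⟨a, haU⟩ = f ⟨a, ha⟩

/-- Gluing lemma: a function continuous on two closed sets is continuous on their union. -/
lemma continuousOn_union_of_isClosed {Z W : Type*} [TopologicalSpace Z] [TopologicalSpace W]
    {f : Z → W} {s t : Set Z} (hs : IsClosed s) (ht : IsClosed t)
    (hfs : ContinuousOn f s) (hft : ContinuousOn f t) : ContinuousOn f (s ∪ t) := by
  intro x hx
  have hs' : ContinuousWithinAt f s x := by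
    by_cases hxs : x ∈ s
    · exact hfs x hxs
    · exact continuousWithinAt_of_notMem_closure (by rwa [hs.closure_eq])
  have ht' : ContinuousWithinAt f t x := by
    by_cases hxt : x ∈ t
    · exact hft x hxt
    · exact continuousWithinAt_of_notMem_closure (by rwa [ht.closure_eq])
  exact hs'.union ht'

/-- If `C` is a compact cell-like set in a metric space `X` and `e : C → Y` is an
embedding into an ANR `Y`, then the image `e(C)` is cell-like in `Y`. -/
theorem cellLike_image_in_ANR {X Y : Type u} [MetricSpace X] [MetricSpace Y]
    {C : Set X} (hC : CellLike C) (hY : IsANR Y)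
    (e : C → Y) (he : Topology.IsEmbedding e) :
    CellLike (Set.range e) := by
  classical
  obtain ⟨hCcpt, hCcl⟩ := hC
  have hecont : Continuous e := he.continuous
  haveI : CompactSpace C := isCompact_iff_compactSpace.mp hCcpt
  have hRcpt : IsCompact (Set.range e) := isCompact_range hecont
  -- Step 1: extend `e` over a neighborhood `W` of `C` in `X` using the ANR property.
  obtain ⟨W, hWopen, hCW, g, hg⟩ :=
    hY X inferInstance C hCcpt.isClosed ⟨e, hecont⟩
  refine ⟨hRcpt, ?_⟩
  intro U hUopen hRU
  -- `W''` : points of `W` mapped into `U` by `g`.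
  set W'' : Set X := Subtype.val '' (g ⁻¹' U) with hW''def
  have hW''open : IsOpen W'' :=
    hWopen.isOpenMap_subtype_val _ (hUopen.preimage g.continuous)
  have hW''sub : W'' ⊆ W := by rintro x ⟨z, hz, rfl⟩; exact z.2
  have hmemW'' : ∀ x : X, x ∈ W'' → ∀ hxW : x ∈ W, g ⟨x, hxW⟩ ∈ U := by
    rintro x ⟨z, hz, rfl⟩ hxW
    have : (⟨z.1, hxW⟩ : W) = z := Subtype.ext rfl
    rwa [this]
  have hCW'' : C ⊆ W'' := by
    intro x hx
    refine ⟨⟨x, hCW hx⟩, ?_, rfl⟩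
    show g ⟨x, hCW hx⟩ ∈ U
    rw [hg x hx (hCW hx)]
    exact hRU ⟨⟨x, hx⟩, rfl⟩
  -- Step 2: use cell-likeness of `C` for the neighborhood `W''`.
  obtain ⟨V', hV'open, hCV', hV'W'', c₀, ⟨H⟩⟩ := hCcl W'' hW''open hCW''
  -- The map `q : W'' → Y`, essentially `g`, with values in `U`.
  let q : C(W'', Y) := ⟨fun x => g ⟨x.1, hW''sub x.2⟩,
    g.continuous.comp (continuous_subtype_val.subtype_mk _)⟩
  have hqU : ∀ x : W'', q x ∈ U := fun x => hmemW'' x.1 x.2 (hW''sub x.2)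
  -- Inverse of the embedding.
  let einv : (Set.range e) ≃ₜ C := (he.toHomeomorph).symm
  have heinv : ∀ y : Set.range e, e (einv y) = (y : Y) := by
    intro y
    have := (he.toHomeomorph).apply_symm_apply y
    exact congrArg Subtype.val this
  -- The homotopy on the image, with values in `U`.
  let incl : (Set.range e) → V' := fun y => ⟨(einv y).1, hCV' (einv y).2⟩
  have hinclcont : Continuous incl :=
    (continuous_subtype_val.comp einv.continuous).subtype_mk _
  let F₁ : C(unitInterval × (Set.range e), Y) :=
    ⟨fun p => q (H (p.1, incl p.2)),
      q.continuous.comp (H.continuous.comp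
        (continuous_fst.prodMk (hinclcont.comp continuous_snd)))⟩
  have hF₁U : ∀ p, F₁ p ∈ U := fun p => hqU _
  have hF₁0 : ∀ y, F₁ (0, y) = (y : Y) := by
    intro y
    show q (H (0, incl y)) = (y : Y)
    rw [H.apply_zero]
    show g ⟨(einv y).1, _⟩ = (y : Y)
    have hC' : (einv y).1 ∈ C := (einv y).2
    rw [hg (einv y).1 hC' _]
    show e ⟨(einv y).1, hC'⟩ = (y : Y)
    rw [show (⟨(einv y).1, hC'⟩ : C) = einv y from Subtype.ext rfl]
    exact heinv y
  have hF₁1 : ∀ y, F₁ (1, y) = q c₀ := by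
    intro y
    show q (H (1, incl y)) = q c₀
    rw [H.apply_one]
    rfl
  set c₁ : Y := q c₀ with hc₁def
  have hc₁U : c₁ ∈ U := hqU c₀
  -- Step 3: build a map on a closed subset of `Y × ℝ` and extend it by the ANR property.
  set A₁ : Set (Y × ℝ) := (Set.range e) ×ˢ (Set.univ : Set ℝ) with hA₁def
  set A₂ : Set (Y × ℝ) := (Set.univ : Set Y) ×ˢ (Set.Iic (0 : ℝ)) with hA₂def
  set A₃ : Set (Y × ℝ) := (Set.univ : Set Y) ×ˢ (Set.Ici (1 : ℝ)) with hA₃def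
  set A : Set (Y × ℝ) := A₁ ∪ A₂ ∪ A₃ with hAdef
  have hA₁closed : IsClosed A₁ := hRcpt.isClosed.prod isClosed_univ
  have hA₂closed : IsClosed A₂ := isClosed_univ.prod isClosed_Iic
  have hA₃closed : IsClosed A₃ := isClosed_univ.prod isClosed_Ici
  have hAclosed : IsClosed A := (hA₁closed.union hA₂closed).union hA₃closed
  set G : Y × ℝ → Y := fun p =>
    if p.2 ≤ 0 then p.1
    else if 1 ≤ p.2 then c₁
    else if h : p.1 ∈ Set.range e then
      F₁ (Set.projIcc (0 : ℝ) 1 zero_le_one p.2, ⟨p.1, h⟩)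
    else c₁ with hGdef
  -- `G` agrees with a manifestly continuous map on `A₁`.
  have hGA₁eq : ∀ (p : Y × ℝ) (hp : p.1 ∈ Set.range e),
      G p = F₁ (Set.projIcc (0 : ℝ) 1 zero_le_one p.2, ⟨p.1, hp⟩) := by
    intro p hp
    by_cases h0 : p.2 ≤ 0
    · simp only [hGdef]
      simp only [if_pos h0]
      rw [Set.projIcc_of_le_left _ h0]
      exact (hF₁0 ⟨p.1, hp⟩).symm
    · by_cases h1 : 1 ≤ p.2
      · simp only [hGdef]
        simp only [if_neg h0, if_pos h1]
        rw [Set.projIcc_of_right_le _ h1]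
        exact (hF₁1 ⟨p.1, hp⟩).symm
      · simp only [hGdef]
        simp only [if_neg h0, if_neg h1, dif_pos hp]
  have hGA₁ : ContinuousOn G A₁ := by
    rw [continuousOn_iff_continuous_restrict]
    have : Continuous fun p : A₁ =>
        F₁ (Set.projIcc (0 : ℝ) 1 zero_le_one p.1.2, ⟨p.1.1, p.2.1⟩) :=
      F₁.continuous.comp
        ((continuous_projIcc.comp (continuous_snd.comp continuous_subtype_val)).prodMk
          ((continuous_fst.comp continuous_subtype_val).subtype_mk _))
    refine this.congr ?_
    intro p
    exact (hGA₁eq p.1 p.2.1).symm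
  have hGA₂ : ContinuousOn G A₂ := by
    refine (continuous_fst.continuousOn (s := A₂)).congr ?_
    intro p hp
    have h0 : p.2 ≤ 0 := hp.2
    simp only [hGdef, if_pos h0]
  have hGA₃ : ContinuousOn G A₃ := by
    refine (continuousOn_const (c := c₁) (s := A₃)).congr ?_
    intro p hp
    have h1 : (1 : ℝ) ≤ p.2 := hp.2
    have h0 : ¬ p.2 ≤ 0 := by linarith
    simp only [hGdef, if_neg h0, if_pos h1]
  have hGA : ContinuousOn G A :=
    continuousOn_union_of_isClosed (hA₁closed.union hA₂closed) hA₃closed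
      (continuousOn_union_of_isClosed hA₁closed hA₂closed hGA₁ hGA₂) hGA₃
  -- `G` has values in `U` whenever it matters.
  have hGU : ∀ p : Y × ℝ, p.1 ∈ Set.range e → G p ∈ U := by
    intro p hp
    simp only [hGdef]
    split_ifs with h0 h1
    · exact hRU hp
    · exact hc₁U
    · exact hF₁U _
  -- Extend over a neighborhood of `A`.
  obtain ⟨O, hOopen, hAO, G', hG'⟩ :=
    hY (Y × ℝ) inferInstance A hAclosed ⟨A.restrict G, continuousOn_iff_continuous_restrict.mp hGA⟩
  have hG'A : ∀ p : Y × ℝ, p ∈ A → ∀ hpO : p ∈ O, G' ⟨p, hpO⟩ = G p := by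
    intro p hp hpO
    rw [hG' p hp hpO]
    rfl
  -- `Ω` : the points of `O` mapped into `U`.
  set Ω : Set (Y × ℝ) := Subtype.val '' (G' ⁻¹' U) with hΩdef
  have hΩopen : IsOpen Ω := hOopen.isOpenMap_subtype_val _ (hUopen.preimage G'.continuous)
  have hΩO : Ω ⊆ O := by rintro p ⟨z, hz, rfl⟩; exact z.2
  have hmemΩ : ∀ p : Y × ℝ, p ∈ Ω → ∀ hpO : p ∈ O, G' ⟨p, hpO⟩ ∈ U := by
    rintro p ⟨z, hz, rfl⟩ hpO
    have : (⟨z.1, hpO⟩ : O) = z := Subtype.ext rfl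
    rwa [this]
  -- The compact set `range e × [0,1]` lies in `Ω`.
  have hKΩ : (Set.range e) ×ˢ Set.Icc (0 : ℝ) 1 ⊆ Ω := by
    rintro p ⟨hp1, hp2⟩
    have hpA : p ∈ A := Or.inl (Or.inl ⟨hp1, Set.mem_univ _⟩)
    have hpO : p ∈ O := hAO hpA
    refine ⟨⟨p, hpO⟩, ?_, rfl⟩
    show G' ⟨p, hpO⟩ ∈ U
    rw [hG'A p hpA hpO]
    exact hGU p hp1
  -- Tube lemma: get an open `V ⊇ range e` with `V × [0,1] ⊆ Ω`.
  obtain ⟨V, v, hVopen, hvopen, hRV, hIv, hsub⟩ :=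
    generalized_tube_lemma hRcpt isCompact_Icc hΩopen hKΩ
  have hVΩ : ∀ y ∈ V, ∀ t ∈ Set.Icc (0 : ℝ) 1, (y, t) ∈ Ω := by
    intro y hy t ht
    exact hsub ⟨hy, hIv ht⟩
  have hVU : V ⊆ U := by
    intro y hy
    have hΩ0 : (y, (0 : ℝ)) ∈ Ω := hVΩ y hy 0 ⟨le_refl _, zero_le_one⟩
    have hpA : (y, (0 : ℝ)) ∈ A := Or.inl (Or.inr ⟨Set.mem_univ _, le_refl (0 : ℝ)⟩)
    have hpO : (y, (0 : ℝ)) ∈ O := hΩO hΩ0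
    have := hmemΩ _ hΩ0 hpO
    rw [hG'A _ hpA hpO] at this
    have hGy : G (y, (0 : ℝ)) = y := by simp only [hGdef]; simp
    rwa [hGy] at this
  refine ⟨V, hVopen, hRV, hVU, ⟨c₁, hc₁U⟩, ?_⟩
  -- Build the homotopy from the inclusion `V → U` to the constant `c₁`.
  have hmem : ∀ p : unitInterval × V, ((p.2 : Y), (p.1 : ℝ)) ∈ O :=
    fun p => hΩO (hVΩ _ p.2.2 _ p.1.2)
  have hval : ∀ p : unitInterval × V, G' ⟨((p.2 : Y), (p.1 : ℝ)), hmem p⟩ ∈ U := by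
    intro p
    exact hmemΩ _ (hVΩ _ p.2.2 _ p.1.2) (hmem p)
  refine ⟨⟨⟨fun p => ⟨G' ⟨((p.2 : Y), (p.1 : ℝ)), hmem p⟩, hval p⟩, ?_⟩, ?_, ?_⟩⟩
  · exact (G'.continuous.comp
      (((continuous_subtype_val.comp continuous_snd).prodMk
        (continuous_subtype_val.comp continuous_fst)).subtype_mk _)).subtype_mk _
  · intro x
    apply Subtype.ext
    show G' ⟨((x : Y), ((0 : unitInterval) : ℝ)), _⟩ = (x : Y)
    have h0 : ((0 : unitInterval) : ℝ) = 0 := rfl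
    have hpA : ((x : Y), ((0 : unitInterval) : ℝ)) ∈ A := by
      rw [h0]; exact Or.inl (Or.inr ⟨Set.mem_univ _, le_refl (0 : ℝ)⟩)
    rw [hG'A _ hpA _]
    simp only [hGdef]
    simp [h0]
  · intro x
    apply Subtype.ext
    show G' ⟨((x : Y), ((1 : unitInterval) : ℝ)), _⟩ = c₁
    have h1 : ((1 : unitInterval) : ℝ) = 1 := rfl
    have hpA : ((x : Y), ((1 : unitInterval) : ℝ)) ∈ A := by
      rw [h1]; exact Or.inr ⟨Set.mem_univ _, le_refl (1 : ℝ)⟩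
    rw [hG'A _ hpA _]
    simp only [hGdef]
    norm_num [h1]
end

section
/- The intersection ∩_{n=1}^∞ C_n of the defining sequence of Antoine's necklace is homeomorphic to the Cantor set. -/
set_option linter.unusedSectionVars false

open Set Topology Metric
open scoped ENNReal

namespace AntoineCantorAux

open scoped Classical

variable {α : Type*} [MetricSpace α]

/-! ### unions over lists of sets -/

lemma lunion_nil : (⋃ Q ∈ ([] : List (Set α)), Q) = ∅ := by simp

lemma lunion_cons (s : Set α) (r : List (Set α)) :
    (⋃ Q ∈ (s :: r : List (Set α)), Q) = s ∪ ⋃ Q ∈ r, Q := by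
  ext x
  simp only [mem_iUnion, List.mem_cons, mem_union, exists_prop]
  constructor
  · rintro ⟨Q, (rfl | hQ), hx⟩
    · exact Or.inl hx
    · exact Or.inr ⟨Q, hQ, hx⟩
  · rintro (hx | ⟨Q, hQ, hx⟩)
    · exact ⟨s, Or.inl rfl, hx⟩
    · exact ⟨Q, Or.inr hQ, hx⟩

lemma lunion_singleton (s : Set α) : (⋃ Q ∈ ([s] : List (Set α)), Q) = s := by
  rw [lunion_cons, lunion_nil, union_empty]

lemma lunion_subset {L : List (Set α)} {U : Set α} (h : ∀ Q ∈ L, Q ⊆ U) :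
    (⋃ Q ∈ L, Q) ⊆ U := by
  intro x hx
  rcases mem_iUnion₂.mp hx with ⟨Q, hQ, hxQ⟩
  exact h Q hQ hxQ

lemma lunion_isClosed {L : List (Set α)} (h : ∀ Q ∈ L, IsClosed Q) :
    IsClosed (⋃ Q ∈ L, Q) := by
  induction L with
  | nil => rw [lunion_nil]; exact isClosed_empty
  | cons s r ih =>
      rw [lunion_cons]
      exact (h s (by simp)).union (ih fun Q hQ => h Q (by simp [hQ]))

lemma disjoint_head_lunion {s : Set α} {r : List (Set α)}
    (h : (s :: r).Pairwise Disjoint) : Disjoint s (⋃ Q ∈ r, Q) := by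
  rw [disjoint_iUnion₂_right]
  exact fun Q hQ => (List.pairwise_cons.mp h).1 Q hQ

/-! ### Disjointification -/

def disjointify (acc : Set α) : List (Set α) → List (Set α)
  | [] => []
  | s :: r => (s \ acc) :: disjointify (acc ∪ s) r

lemma disjointify_subset (acc : Set α) (L : List (Set α)) :
    ∀ T ∈ disjointify acc L, ∃ Q ∈ L, T ⊆ Q \ acc := by
  induction L generalizing acc with
  | nil => simp [disjointify]
  | cons s r ih =>
      intro T hT
      rcases List.mem_cons.mp hT with h | h
      · exact ⟨s, by simp, h ▸ subset_rfl⟩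
      · obtain ⟨Q, hQ, hTQ⟩ := ih (acc ∪ s) T h
        exact ⟨Q, by simp [hQ],
          hTQ.trans (diff_subset_diff_right subset_union_left)⟩

lemma disjointify_union (acc : Set α) (L : List (Set α)) :
    (⋃ T ∈ disjointify acc L, T) = (⋃ Q ∈ L, Q) \ acc := by
  induction L generalizing acc with
  | nil => simp [disjointify, lunion_nil]
  | cons s r ih =>
      show (⋃ T ∈ ((s \ acc) :: disjointify (acc ∪ s) r : List (Set α)), T) = _
      rw [lunion_cons, ih (acc ∪ s), lunion_cons]
      ext x
      simp only [mem_union, mem_diff, mem_union]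
      tauto

lemma disjointify_pairwise (acc : Set α) (L : List (Set α)) :
    (disjointify acc L).Pairwise Disjoint := by
  induction L generalizing acc with
  | nil => simp [disjointify]
  | cons s r ih =>
      refine List.pairwise_cons.mpr ⟨?_, ih (acc ∪ s)⟩
      intro T hT
      obtain ⟨Q, _, hTQ⟩ := disjointify_subset (acc ∪ s) r T hT
      exact Set.disjoint_left.mpr fun x hx hxT => (hTQ hxT).2 (Or.inr hx.1)

lemma disjointify_clopen {acc : Set α} {L : List (Set α)} (hacc : IsClopen acc)
    (h : ∀ Q ∈ L, IsClopen Q) : ∀ T ∈ disjointify acc L, IsClopen T := by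
  induction L generalizing acc with
  | nil => simp [disjointify]
  | cons s r ih =>
      intro T hT
      rcases List.mem_cons.mp hT with rfl | hT'
      · rw [diff_eq]
        exact (h s (by simp)).inter hacc.compl
      · exact ih (hacc.union (h s (by simp))) (fun Q hQ => h Q (by simp [hQ])) T hT'

lemma lunion_filter_nonempty (L : List (Set α)) :
    (⋃ Q ∈ L.filter (fun s => decide s.Nonempty), Q) = ⋃ Q ∈ L, Q := by
  induction L with
  | nil => simp
  | cons s r ih =>
      by_cases hs : s.Nonempty
      · rw [List.filter_cons_of_pos (by simpa using hs), lunion_cons, lunion_cons, ih]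
      · rw [List.filter_cons_of_neg (by simpa using hs), lunion_cons, ih,
          not_nonempty_iff_eq_empty.mp hs, empty_union]


section Partition

variable [CompactSpace α] [TotallyDisconnectedSpace α]

lemma split_two (hperf : ∀ U : Set α, IsOpen U → U.Nonempty → ∃ a ∈ U, ∃ b ∈ U, a ≠ b)
    {U : Set α} (hU : IsClopen U) (hne : U.Nonempty) :
    ∃ V W : Set α, IsClopen V ∧ IsClopen W ∧ V.Nonempty ∧ W.Nonempty ∧
      Disjoint V W ∧ V ∪ W = U := by
  obtain ⟨a, ha, b, hb, hab⟩ := hperf U hU.isOpen hne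
  haveI : TotallySeparatedSpace α := loc_compact_t2_tot_disc_iff_tot_sep.mp inferInstance
  obtain ⟨S, hS, haS, hbS⟩ := exists_isClopen_of_totally_separated hab
  refine ⟨U ∩ S, U \ S, hU.inter hS, ?_, ⟨a, ha, haS⟩, ⟨b, hb, hbS⟩, ?_, ?_⟩
  · rw [diff_eq]; exact hU.inter hS.compl
  · exact Disjoint.mono_left inter_subset_right disjoint_sdiff_self_right
  · exact inter_union_diff U S

lemma exists_partition (hperf : ∀ U : Set α, IsOpen U → U.Nonempty → ∃ a ∈ U, ∃ b ∈ U, a ≠ b)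
    {U : Set α} (hU : IsClopen U) (hne : U.Nonempty) {ε : ℝ≥0∞} (hε : 0 < ε) :
    ∃ R : List (Set α), 2 ≤ R.length ∧
      (∀ Q ∈ R, IsClopen Q ∧ Q.Nonempty ∧ EMetric.diam Q ≤ ε) ∧
      R.Pairwise Disjoint ∧ (⋃ Q ∈ R, Q) = U := by
  -- clopen cover with small pieces
  have hV : ∀ x : α, ∃ V : Set α, x ∈ U →
      IsClopen V ∧ x ∈ V ∧ V ⊆ U ∩ EMetric.ball x (ε / 2) := by
    intro x
    by_cases hx : x ∈ U
    · obtain ⟨V, hVc, hxV, hVsub⟩ := compact_exists_isClopen_in_isOpen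
        (hU.isOpen.inter EMetric.isOpen_ball)
        (⟨hx, EMetric.mem_ball_self (ENNReal.half_pos hε.ne')⟩ : x ∈ U ∩ EMetric.ball x (ε / 2))
      exact ⟨V, fun _ => ⟨hVc, hxV, hVsub⟩⟩
    · exact ⟨∅, fun hx' => absurd hx' hx⟩
  choose V hV using hV
  have hcov : U ⊆ ⋃ x ∈ U, V x := fun x hx =>
    mem_biUnion hx (hV x hx).2.1
  obtain ⟨t, htU, htfin, htcov⟩ :=
    (hU.isClosed.isCompact).elim_finite_subcover_image
      (fun x hx => (hV x hx).1.isOpen) hcov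
  classical
  set L : List (Set α) := htfin.toFinset.toList.map V with hL
  have hmemL : ∀ Q ∈ L, ∃ x ∈ t, Q = V x := by
    intro Q hQ
    rw [hL] at hQ
    obtain ⟨x, hx, rfl⟩ := List.mem_map.mp hQ
    exact ⟨x, by simpa [Set.Finite.mem_toFinset] using (Finset.mem_toList.mp hx), rfl⟩
  have hLprop : ∀ Q ∈ L, IsClopen Q ∧ Q ⊆ U ∧ EMetric.diam Q ≤ ε := by
    intro Q hQ
    obtain ⟨x, hxt, rfl⟩ := hmemL Q hQ
    have hx : x ∈ U := htU hxt
    refine ⟨(hV x hx).1, (hV x hx).2.2.trans inter_subset_left, ?_⟩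
    calc EMetric.diam (V x) ≤ EMetric.diam (EMetric.ball x (ε / 2)) :=
          EMetric.diam_mono ((hV x hx).2.2.trans inter_subset_right)
      _ ≤ 2 * (ε / 2) := EMetric.diam_ball
      _ ≤ ε := ENNReal.mul_div_le
  have hLU : (⋃ Q ∈ L, Q) = U := by
    apply subset_antisymm (lunion_subset fun Q hQ => (hLprop Q hQ).2.1)
    intro x hx
    obtain ⟨y, hy, hxy⟩ := mem_iUnion₂.mp (htcov hx)
    refine mem_iUnion₂.mpr ⟨V y, ?_, hxy⟩
    rw [hL]
    exact List.mem_map.mpr ⟨y, Finset.mem_toList.mpr (htfin.mem_toFinset.mpr hy), rfl⟩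
  -- disjointify and filter out empties
  set D : List (Set α) := (disjointify ∅ L).filter (fun s => decide s.Nonempty) with hD
  have hDmem : ∀ T ∈ D, T ∈ disjointify ∅ L ∧ T.Nonempty := by
    intro T hT
    rw [hD] at hT
    have := List.mem_filter.mp hT
    exact ⟨this.1, of_decide_eq_true this.2⟩
  have hDunion : (⋃ T ∈ D, T) = U := by
    rw [hD, lunion_filter_nonempty, disjointify_union, diff_empty, hLU]
  have hDclopen : ∀ T ∈ D, IsClopen T := fun T hT =>
    disjointify_clopen isClopen_empty (fun Q hQ => (hLprop Q hQ).1) T (hDmem T hT).1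
  have hDdiam : ∀ T ∈ D, EMetric.diam T ≤ ε := by
    intro T hT
    obtain ⟨Q, hQ, hTQ⟩ := disjointify_subset ∅ L T (hDmem T hT).1
    exact le_trans (EMetric.diam_mono (hTQ.trans diff_subset)) (hLprop Q hQ).2.2
  have hDpair : D.Pairwise Disjoint :=
    (disjointify_pairwise ∅ L).sublist List.filter_sublist
  clear_value D
  -- D is nonempty
  obtain ⟨T, rest, rfl⟩ : ∃ T rest, D = T :: rest := by
    rcases D with _ | ⟨T, rest⟩
    · exfalso
      rw [lunion_nil] at hDunion
      exact hne.ne_empty hDunion.symm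
    · exact ⟨T, rest, rfl⟩
  -- split the head in two
  obtain ⟨Vh, Wh, hVc, hWc, hVne, hWne, hVW, hVWU⟩ :=
    split_two hperf (hDclopen T (by simp)) (hDmem T (by simp)).2
  refine ⟨Vh :: Wh :: rest, by simp, ?_, ?_, ?_⟩
  · intro Q hQ
    have hVsub : Vh ⊆ T := hVWU ▸ (subset_union_left : Vh ⊆ Vh ∪ Wh)
    have hWsub : Wh ⊆ T := hVWU ▸ (subset_union_right : Wh ⊆ Vh ∪ Wh)
    rcases List.mem_cons.mp hQ with rfl | hQ
    · exact ⟨hVc, hVne, le_trans (EMetric.diam_mono hVsub) (hDdiam T (by simp))⟩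
    rcases List.mem_cons.mp hQ with rfl | hQ
    · exact ⟨hWc, hWne, le_trans (EMetric.diam_mono hWsub) (hDdiam T (by simp))⟩
    · exact ⟨hDclopen Q (by simp [hQ]), (hDmem Q (by simp [hQ])).2, hDdiam Q (by simp [hQ])⟩
  · have hTrest : ∀ r ∈ rest, Disjoint T r := (List.pairwise_cons.mp hDpair).1
    have hVsub : Vh ⊆ T := hVWU ▸ (subset_union_left : Vh ⊆ Vh ∪ Wh)
    have hWsub : Wh ⊆ T := hVWU ▸ (subset_union_right : Wh ⊆ Vh ∪ Wh)
    refine List.pairwise_cons.mpr ⟨?_, List.pairwise_cons.mpr ⟨?_, (List.pairwise_cons.mp hDpair).2⟩⟩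
    · intro Q hQ
      rcases List.mem_cons.mp hQ with rfl | hQ
      · exact hVW
      · exact (hTrest Q hQ).mono_left hVsub
    · intro Q hQ
      exact (hTrest Q hQ).mono_left hWsub
  · rw [lunion_cons, lunion_cons, ← union_assoc, hVWU, ← lunion_cons, hDunion]

end Partition

/-! ### The state machine producing a binary Cantor scheme -/

section Scheme

lemma subset_lunion {L : List (Set α)} {Q : Set α} (h : Q ∈ L) : Q ⊆ ⋃ Q ∈ L, Q :=
  fun x hx => mem_iUnion₂.mpr ⟨Q, h, hx⟩

variable (ref : Set α → ℕ → List (Set α))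

def RefOK : Prop :=
  ∀ U n, IsClopen U → U.Nonempty →
    2 ≤ (ref U n).length ∧
    (∀ Q ∈ ref U n, IsClopen Q ∧ Q.Nonempty ∧ EMetric.diam Q ≤ ((n + 1 : ℕ) : ℝ≥0∞)⁻¹) ∧
    (ref U n).Pairwise Disjoint ∧ (⋃ Q ∈ ref U n, Q) = U

def step (b : Bool) (σ : ℕ × List (Set α)) : ℕ × List (Set α) :=
  if 2 ≤ σ.2.length then (σ.1, cond b σ.2.tail [σ.2.headI])
  else (σ.1 + 1, cond b (ref σ.2.headI σ.1).tail [(ref σ.2.headI σ.1).headI])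

def states : List Bool → ℕ × List (Set α)
  | [] => (0, [Set.univ])
  | b :: l => step ref b (states l)

def node (σ : ℕ × List (Set α)) : Set α := ⋃ Q ∈ σ.2, Q

def Inv (σ : ℕ × List (Set α)) : Prop :=
  σ.2 ≠ [] ∧
    (∀ Q ∈ σ.2, IsClopen Q ∧ Q.Nonempty ∧ EMetric.diam Q ≤ ((σ.1 : ℕ) : ℝ≥0∞)⁻¹) ∧
    σ.2.Pairwise Disjoint

variable {ref}

lemma step_fst_le (b : Bool) (σ : ℕ × List (Set α)) : σ.1 ≤ (step ref b σ).1 := by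
  rw [step]; split_ifs <;> simp [Nat.le_succ]

lemma step_fst_of_lt {σ : ℕ × List (Set α)} (h2 : σ.2.length < 2) (b : Bool) :
    (step ref b σ).1 = σ.1 + 1 := by
  rw [step, if_neg (by omega)]

lemma step_len_false (σ : ℕ × List (Set α)) : ((step ref false σ).2).length = 1 := by
  rw [step]; split_ifs <;> simp

lemma step_len_true {σ : ℕ × List (Set α)} (h2 : 2 ≤ σ.2.length) :
    ((step ref true σ).2).length = σ.2.length - 1 := by
  rw [step, if_pos h2]; simp

lemma inv_singleton {σ : ℕ × List (Set α)} (h : Inv σ) (h2 : ¬ 2 ≤ σ.2.length) :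
    ∃ q, σ.2 = [q] := by
  obtain ⟨n, P⟩ := σ
  rcases P with _ | ⟨q, r⟩
  · exact absurd rfl h.1
  · rcases r with _ | ⟨q', r'⟩
    · exact ⟨q, rfl⟩
    · exact absurd (by simp) h2

/-- Packaging of the two cases of `step`. -/
lemma step_cases (href : RefOK ref) {σ : ℕ × List (Set α)} (h : Inv σ) :
    ∃ (m : ℕ) (a : Set α) (s : List (Set α)),
      step ref false σ = (m, [a]) ∧ step ref true σ = (m, s) ∧ s ≠ [] ∧
      σ.1 ≤ m ∧
      (∀ Q ∈ a :: s, IsClopen Q ∧ Q.Nonempty ∧ EMetric.diam Q ≤ ((m : ℕ) : ℝ≥0∞)⁻¹) ∧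
      (a :: s).Pairwise Disjoint ∧
      (⋃ Q ∈ (a :: s : List (Set α)), Q) = node σ := by
  obtain ⟨hne, hprop, hpair⟩ := h
  by_cases h2 : 2 ≤ σ.2.length
  · rcases hl : σ.2 with _ | ⟨q, r⟩
    · exact absurd hl hne
    have hr : r ≠ [] := by
      intro hrnil; rw [hl, hrnil] at h2; simp at h2
    refine ⟨σ.1, q, r, ?_, ?_, hr, le_rfl, ?_, ?_, ?_⟩
    · rw [step, if_pos h2, hl]; rfl
    · rw [step, if_pos h2, hl]; rfl
    · intro Q hQ; exact hprop Q (hl ▸ hQ)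
    · exact hl ▸ hpair
    · rw [node, hl]
  · obtain ⟨q, hq⟩ := inv_singleton ⟨hne, hprop, hpair⟩ h2
    have hqmem : q ∈ σ.2 := by rw [hq]; simp
    obtain ⟨hqc, hqne, _⟩ := hprop q hqmem
    obtain ⟨hlen, hQs, hPr, hUn⟩ := href q σ.1 hqc hqne
    have hhead : σ.2.headI = q := by rw [hq]; rfl
    rcases hR : ref q σ.1 with _ | ⟨a, s⟩
    · rw [hR] at hlen; simp at hlen
    have hs : s ≠ [] := by
      intro hsnil; rw [hR, hsnil] at hlen; simp at hlen
    refine ⟨σ.1 + 1, a, s, ?_, ?_, hs, Nat.le_succ _, ?_, ?_, ?_⟩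
    · rw [step, if_neg h2, hhead, hR]; rfl
    · rw [step, if_neg h2, hhead, hR]; rfl
    · intro Q hQ; exact hQs Q (hR ▸ hQ)
    · exact hR ▸ hPr
    · rw [← hR, hUn, node, hq, lunion_singleton]

lemma step_inv (href : RefOK ref) {σ : ℕ × List (Set α)} (h : Inv σ) (b : Bool) :
    Inv (step ref b σ) := by
  obtain ⟨m, a, s, hf, ht, hs, _, hprops, hpair, _⟩ := step_cases href h
  cases b
  · rw [hf]
    refine ⟨by simp, ?_, List.pairwise_singleton _ _⟩
    intro Q hQ
    rw [List.mem_singleton.mp hQ]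
    exact hprops a (by simp)
  · rw [ht]
    exact ⟨hs, fun Q hQ => hprops Q (by simp [hQ]), (List.pairwise_cons.mp hpair).2⟩

lemma node_step_subset (href : RefOK ref) {σ : ℕ × List (Set α)} (h : Inv σ) (b : Bool) :
    node (step ref b σ) ⊆ node σ := by
  obtain ⟨m, a, s, hf, ht, hs, _, hprops, hpair, hun⟩ := step_cases href h
  cases b
  · rw [hf, node]
    simp only
    rw [lunion_singleton]
    exact (subset_lunion (by simp : a ∈ a :: s)).trans (le_of_eq hun)
  · rw [ht, node]
    refine lunion_subset fun Q hQ => ?_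
    exact (subset_lunion (by simp [hQ] : Q ∈ a :: s)).trans (le_of_eq hun)

lemma node_step_union (href : RefOK ref) {σ : ℕ × List (Set α)} (h : Inv σ) :
    node (step ref false σ) ∪ node (step ref true σ) = node σ := by
  obtain ⟨m, a, s, hf, ht, hs, _, hprops, hpair, hun⟩ := step_cases href h
  rw [hf, ht, node, node]
  simp only
  rw [lunion_singleton, ← hun, lunion_cons]

lemma node_step_disjoint (href : RefOK ref) {σ : ℕ × List (Set α)} (h : Inv σ) :
    Disjoint (node (step ref false σ)) (node (step ref true σ)) := by
  obtain ⟨m, a, s, hf, ht, hs, _, hprops, hpair, hun⟩ := step_cases href h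
  rw [hf, ht, node, node]
  simp only
  rw [lunion_singleton]
  exact disjoint_head_lunion hpair

lemma node_closed {σ : ℕ × List (Set α)} (h : Inv σ) : IsClosed (node σ) :=
  lunion_isClosed fun Q hQ => ((h.2.1 Q hQ).1).isClosed

lemma node_nonempty {σ : ℕ × List (Set α)} (h : Inv σ) : (node σ).Nonempty := by
  rcases hl : σ.2 with _ | ⟨q, r⟩
  · exact absurd hl h.1
  obtain ⟨x, hx⟩ := (h.2.1 q (by rw [hl]; simp)).2.1
  exact ⟨x, mem_iUnion₂.mpr ⟨q, by rw [hl]; simp, hx⟩⟩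

lemma node_diam_of_len1 {σ : ℕ × List (Set α)} (h : Inv σ) (hlen : σ.2.length = 1) :
    EMetric.diam (node σ) ≤ ((σ.1 : ℕ) : ℝ≥0∞)⁻¹ := by
  rcases hl : σ.2 with _ | ⟨q, r⟩
  · exact absurd hl h.1
  have hr : r = [] := by rw [hl] at hlen; simpa using hlen
  subst hr
  rw [node, hl, lunion_singleton]
  exact (h.2.1 q (by rw [hl]; simp)).2.2

lemma states_inv [Nonempty α] (href : RefOK ref) : ∀ l : List Bool, Inv (states ref l)
  | [] => by
      refine ⟨by simp [states], ?_, by simp [states, List.pairwise_singleton]⟩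
      intro Q hQ
      rw [states] at hQ
      rw [List.mem_singleton] at hQ
      subst hQ
      exact ⟨isClopen_univ, univ_nonempty, by simp [states]⟩
  | b :: l => by
      rw [states]
      exact step_inv href (states_inv href l) b


end Scheme

section Branch

variable {ref : Set α → ℕ → List (Set α)}

lemma states_res_succ (x : ℕ → Bool) (m : ℕ) :
    states ref (PiNat.res x (m + 1)) = step ref (x m) (states ref (PiNat.res x m)) := by
  rw [PiNat.res_succ, states]

lemma counter_mono (x : ℕ → Bool) :
    Monotone fun m => (states ref (PiNat.res x m)).1 :=
  monotone_nat_of_le_succ fun m => by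
    rw [states_res_succ]; exact step_fst_le _ _

lemma exists_len_one [Nonempty α] (href : RefOK ref) (x : ℕ → Bool) (m : ℕ) :
    ∃ m' ≥ m, ((states ref (PiNat.res x m')).2).length = 1 := by
  have key : ∀ (L : ℕ) (m : ℕ), ((states ref (PiNat.res x m)).2).length ≤ L →
      ∃ m' ≥ m, ((states ref (PiNat.res x m')).2).length = 1 := by
    intro L
    induction L with
    | zero =>
        intro m h
        have h1 := List.length_pos_iff.mpr (states_inv href (PiNat.res x m)).1
        omega
    | succ L ih =>
        intro m h
        by_cases h2 : 2 ≤ ((states ref (PiNat.res x m)).2).length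
        · cases hx : x m with
          | false =>
              refine ⟨m + 1, by omega, ?_⟩
              rw [states_res_succ, hx]
              exact step_len_false _
          | true =>
              have hlen : ((states ref (PiNat.res x (m + 1))).2).length =
                  ((states ref (PiNat.res x m)).2).length - 1 := by
                rw [states_res_succ, hx]
                exact step_len_true h2
              obtain ⟨m', hm', h1⟩ := ih (m + 1) (by omega)
              exact ⟨m', by omega, h1⟩
        · have h1 := List.length_pos_iff.mpr (states_inv href (PiNat.res x m)).1
          exact ⟨m, le_rfl, by omega⟩
  exact key _ m le_rfl

lemma counter_unbounded [Nonempty α] (href : RefOK ref) (x : ℕ → Bool) :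
    ∀ k : ℕ, ∃ m, k ≤ (states ref (PiNat.res x m)).1 := by
  intro k
  induction k with
  | zero => exact ⟨0, Nat.zero_le _⟩
  | succ k ihk =>
      obtain ⟨m, hm⟩ := ihk
      obtain ⟨m', hm'ge, hlen⟩ := exists_len_one href x m
      refine ⟨m' + 1, ?_⟩
      have hstep : (states ref (PiNat.res x (m' + 1))).1 =
          (states ref (PiNat.res x m')).1 + 1 := by
        rw [states_res_succ]
        exact step_fst_of_lt (by omega) _
      have hmono := counter_mono (ref := ref) x hm'ge
      simp only at hmono
      omega

lemma scheme_anti [Nonempty α] (href : RefOK ref) (x : ℕ → Bool) {m m' : ℕ} (h : m ≤ m') :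
    node (states ref (PiNat.res x m')) ⊆ node (states ref (PiNat.res x m)) := by
  induction m', h using Nat.le_induction with
  | base => exact subset_rfl
  | succ n hn ih =>
      rw [states_res_succ]
      exact (node_step_subset href (states_inv href _) _).trans ih

lemma vanishing [Nonempty α] (href : RefOK ref) :
    CantorScheme.VanishingDiam (fun l => node (states ref l)) := by
  intro x
  rw [ENNReal.tendsto_atTop_zero]
  intro ε hε
  obtain ⟨k, hk⟩ := ENNReal.exists_inv_nat_lt hε.ne'
  obtain ⟨m, hm⟩ := counter_unbounded href x k
  obtain ⟨m', hm'ge, hlen⟩ := exists_len_one href x m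
  refine ⟨m', fun n hn => ?_⟩
  have hcnt : (k : ℕ) ≤ (states ref (PiNat.res x m')).1 :=
    le_trans hm (counter_mono (ref := ref) x hm'ge)
  calc EMetric.diam (node (states ref (PiNat.res x n)))
      ≤ EMetric.diam (node (states ref (PiNat.res x m'))) :=
        EMetric.diam_mono (scheme_anti href x hn)
    _ ≤ (((states ref (PiNat.res x m')).1 : ℕ) : ℝ≥0∞)⁻¹ :=
        node_diam_of_len1 (states_inv href _) hlen
    _ ≤ ((k : ℕ) : ℝ≥0∞)⁻¹ := by
        apply ENNReal.inv_le_inv.mpr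
        exact_mod_cast hcnt
    _ ≤ ε := hk.le

end Branch

/-! ### The abstract Brouwer-type theorem -/

theorem exists_homeo_cantor [CompactSpace α] [TotallyDisconnectedSpace α] [Nonempty α]
    (hperf : ∀ U : Set α, IsOpen U → U.Nonempty → ∃ a ∈ U, ∃ b ∈ U, a ≠ b) :
    Nonempty (α ≃ₜ (ℕ → Bool)) := by
  -- choose the refinement function
  have hex : ∀ (U : Set α) (n : ℕ), ∃ R : List (Set α), IsClopen U → U.Nonempty →
      (2 ≤ R.length ∧
        (∀ Q ∈ R, IsClopen Q ∧ Q.Nonempty ∧ EMetric.diam Q ≤ ((n + 1 : ℕ) : ℝ≥0∞)⁻¹) ∧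
        R.Pairwise Disjoint ∧ (⋃ Q ∈ R, Q) = U) := by
    intro U n
    by_cases h : IsClopen U ∧ U.Nonempty
    · obtain ⟨R, h1, h2, h3, h4⟩ := exists_partition hperf h.1 h.2
        (ENNReal.inv_pos.mpr (ENNReal.natCast_ne_top _))
      exact ⟨R, fun _ _ => ⟨h1, h2, h3, h4⟩⟩
    · exact ⟨[], fun h1 h2 => absurd ⟨h1, h2⟩ h⟩
  choose ref href' using hex
  have href : RefOK ref := fun U n hU hne => href' U n hU hne
  set A : List Bool → Set α := fun l => node (states ref l) with hAdef
  have hnodes : ∀ (b : Bool) (l : List Bool), A (b :: l) = node (step ref b (states ref l)) :=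
    fun b l => by rw [hAdef]; simp only; rw [states]
  have hanti : CantorScheme.Antitone A := by
    intro l a
    rw [hnodes]
    exact node_step_subset href (states_inv href l) a
  have hclosed : ∀ l, IsClosed (A l) := fun l => node_closed (states_inv href l)
  have hCA : CantorScheme.ClosureAntitone A := hanti.closureAntitone hclosed
  have hdisjS : CantorScheme.Disjoint A := by
    intro l a b hab
    have hd := node_step_disjoint href (states_inv href l)
    cases a <;> cases b
    · exact absurd rfl hab
    · rw [hnodes, hnodes]; exact hd
    · rw [hnodes, hnodes]; exact hd.symm
    · exact absurd rfl hab
  have hnonempty : ∀ l, (A l).Nonempty := fun l => node_nonempty (states_inv href l)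
  have hvd : CantorScheme.VanishingDiam A := vanishing href
  haveI : CompleteSpace α := complete_of_compact
  have hdom : (CantorScheme.inducedMap A).1 = Set.univ :=
    hCA.map_of_vanishingDiam hvd hnonempty
  have hdommem : ∀ x : ℕ → Bool, x ∈ (CantorScheme.inducedMap A).1 := fun x => by
    rw [hdom]; trivial
  set F : (ℕ → Bool) → α := fun x => (CantorScheme.inducedMap A).2 ⟨x, hdommem x⟩ with hFdef
  have hFmem : ∀ (x : ℕ → Bool) (n : ℕ), F x ∈ A (PiNat.res x n) := fun x n =>
    CantorScheme.map_mem ⟨x, hdommem x⟩ n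
  have hcont : Continuous F :=
    (hvd.map_continuous).comp (Continuous.subtype_mk continuous_id _)
  have hinj : Function.Injective F := by
    intro x y hxy
    have := hdisjS.map_injective (hxy : (CantorScheme.inducedMap A).2 ⟨x, _⟩ =
      (CantorScheme.inducedMap A).2 ⟨y, _⟩)
    simpa using this
  -- surjectivity
  have hchild : ∀ (l : List Bool) (y : α), y ∈ A l → ∃ b : Bool, y ∈ A (b :: l) := by
    intro l y hy
    have hu := node_step_union href (states_inv href l)
    have : y ∈ node (step ref false (states ref l)) ∪ node (step ref true (states ref l)) := by
      rw [hu]; exact hy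
    rcases this with h | h
    · exact ⟨false, by rw [hnodes]; exact h⟩
    · exact ⟨true, by rw [hnodes]; exact h⟩
  have hsurj : Function.Surjective F := by
    intro y
    have hy0 : y ∈ A [] := by
      rw [hAdef]
      simp only
      rw [states, node, lunion_singleton]
      trivial
    let q : ∀ n : ℕ, {l : List Bool // (y ∈ A l ∧ l.length = n)} := fun n =>
      Nat.rec ⟨[], hy0, rfl⟩
        (fun n ih => ⟨(hchild ih.1 y ih.2.1).choose :: ih.1,
          (hchild ih.1 y ih.2.1).choose_spec, by simp [ih.2.2]⟩) n
    let x : ℕ → Bool := fun n => ((q (n + 1)).1).headI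
    have hres : ∀ n, PiNat.res x n = (q n).1 := by
      intro n
      induction n with
      | zero => rfl
      | succ n ih =>
          rw [PiNat.res_succ, ih]
          rfl
    have hyn : ∀ n, y ∈ A (PiNat.res x n) := fun n => (hres n) ▸ (q n).2.1
    refine ⟨x, ?_⟩
    apply eq_of_forall_dist_le
    intro ε hε
    obtain ⟨n, hn⟩ := hvd.dist_lt ε hε x
    exact le_of_lt (hn _ (hFmem x n) _ (hyn n))
  haveI : CompactSpace (ℕ → Bool) := inferInstance
  let e : (ℕ → Bool) ≃ α := Equiv.ofBijective F ⟨hinj, hsurj⟩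
  exact ⟨(hcont.homeoOfEquivCompactToT2 (f := e)).symm⟩

end AntoineCantorAux


/-- Abstract form of the fact that Antoine's necklace is a Cantor set: if `C` is a
nested sequence of nonempty compact subsets of a metric space such that every connected
component of `C n` contains (points of) at least two distinct components of `C (n+1)`,
and the diameters of the components of `C n` tend to `0`, then `⋂ n, C n` is
homeomorphic to the Cantor set `{0,1}^ℕ`. -/
theorem antoine_intersection_homeomorphic_cantor {X : Type*} [MetricSpace X]
    (C : ℕ → Set X)
    (hcomp : ∀ n, IsCompact (C n))
    (hne : ∀ n, (C n).Nonempty)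
    (hnest : ∀ n, C (n + 1) ⊆ C n)
    (hsplit : ∀ n, ∀ x ∈ C n, ∃ y ∈ C (n + 1), ∃ z ∈ C (n + 1),
      y ∈ connectedComponentIn (C n) x ∧ z ∈ connectedComponentIn (C n) x ∧
      connectedComponentIn (C (n + 1)) y ≠ connectedComponentIn (C (n + 1)) z)
    (hdiam : ∀ ε : ℝ, 0 < ε → ∃ N : ℕ, ∀ n ≥ N, ∀ x ∈ C n,
      Metric.diam (connectedComponentIn (C n) x) < ε) :
    Nonempty ((⋂ n, C n : Set X) ≃ₜ (ℕ → Bool)) := by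
  classical
  set K : Set X := ⋂ n, C n with hK
  have hCanti : Antitone C := antitone_nat_of_succ_le hnest
  have hKmem : ∀ x, x ∈ K → ∀ j, x ∈ C j := by
    intro x hx j
    rw [hK] at hx
    exact Set.mem_iInter.mp hx j
  have hKclosed : IsClosed K := by
    rw [hK]; exact isClosed_iInter fun n => (hcomp n).isClosed
  have hKcomp : IsCompact K :=
    (hcomp 0).of_isClosed_subset hKclosed (hK ▸ Set.iInter_subset C 0)
  -- every component of every `C n` contains a point of `K`
  have hreach : ∀ n : ℕ, ∀ x ∈ C n, ∃ p ∈ K, p ∈ connectedComponentIn (C n) x := by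
    intro n x hx
    let pp : ∀ m : ℕ, {q : X // q ∈ C (n + m)} := fun m =>
      Nat.rec ⟨x, hx⟩ (fun m ih =>
        ⟨(hsplit (n + m) ih.1 ih.2).choose, (hsplit (n + m) ih.1 ih.2).choose_spec.1⟩) m
    have hpp : ∀ m, (pp (m + 1)).1 ∈ connectedComponentIn (C (n + m)) (pp m).1 :=
      fun m => (hsplit (n + m) (pp m).1 (pp m).2).choose_spec.2.choose_spec.2.1
    let S : ℕ → Set X := fun m => connectedComponentIn (C (n + m)) (pp m).1
    have hS0 : S 0 = connectedComponentIn (C n) x := rfl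
    have hSnested : ∀ m, S (m + 1) ⊆ S m := by
      intro m
      have h1 : connectedComponentIn (C (n + (m + 1))) (pp (m + 1)).1 ⊆
          connectedComponentIn (C (n + m)) (pp (m + 1)).1 :=
        connectedComponentIn_mono _ (hnest (n + m))
      have h2 : connectedComponentIn (C (n + m)) (pp m).1 =
          connectedComponentIn (C (n + m)) (pp (m + 1)).1 :=
        connectedComponentIn_eq (hpp m)
      exact h1.trans (le_of_eq h2.symm)
    have hScomp : ∀ m, IsCompact (S m) := by
      intro m
      haveI := isCompact_iff_compactSpace.mp (hcomp (n + m))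
      show IsCompact (connectedComponentIn (C (n + m)) (pp m).1)
      rw [connectedComponentIn_eq_image (pp m).2]
      exact (isClosed_connectedComponent.isCompact).image continuous_subtype_val
    have hSne : ∀ m, (S m).Nonempty := fun m =>
      ⟨(pp m).1, mem_connectedComponentIn (pp m).2⟩
    obtain ⟨p, hp⟩ := IsCompact.nonempty_iInter_of_sequence_nonempty_isCompact_isClosed
      S hSnested hSne (hScomp 0) (fun m => (hScomp m).isClosed)
    refine ⟨p, ?_, ?_⟩
    · rw [hK]
      refine Set.mem_iInter.mpr fun j => ?_
      have hpj : p ∈ S j := Set.mem_iInter.mp hp j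
      have : p ∈ C (n + j) := connectedComponentIn_subset _ _ hpj
      exact hCanti (Nat.le_add_left j n) this
    · have := Set.mem_iInter.mp hp 0
      rwa [hS0] at this
  have hKne : K.Nonempty := by
    obtain ⟨x, hx⟩ := hne 0
    obtain ⟨p, hpK, _⟩ := hreach 0 x hx
    exact ⟨p, hpK⟩
  haveI : CompactSpace K := isCompact_iff_compactSpace.mp hKcomp
  haveI : Nonempty K := hKne.to_subtype
  haveI : TotallyDisconnectedSpace K := by
    rw [totallyDisconnectedSpace_subtype_iff]
    intro t hts hpre a ha b hb
    have hcompsub : ∀ n, t ⊆ connectedComponentIn (C n) a := fun n =>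
      hpre.subset_connectedComponentIn ha (hts.trans fun x hx => hKmem x hx n)
    apply eq_of_forall_dist_le
    intro ε hε
    obtain ⟨N, hN⟩ := hdiam ε hε
    have haCN : a ∈ C N := hKmem a (hts ha) N
    have hbdd : Bornology.IsBounded (connectedComponentIn (C N) a) :=
      ((hcomp N).isBounded).subset (connectedComponentIn_subset _ _)
    exact le_of_lt (lt_of_le_of_lt
      (Metric.dist_le_diam_of_mem hbdd (hcompsub N ha) (hcompsub N hb))
      (hN N le_rfl a haCN))
  have hperfK : ∀ U : Set ↥K, IsOpen U → U.Nonempty →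
      ∃ a ∈ U, ∃ b ∈ U, a ≠ b := by
    intro U hUopen hUne
    obtain ⟨O, hOopen, hOU⟩ := isOpen_induced_iff.mp hUopen
    obtain ⟨⟨x, hxK⟩, hxU⟩ := hUne
    have hxO : x ∈ O := by
      rw [← hOU] at hxU
      exact hxU
    obtain ⟨ε, hεpos, hball⟩ := Metric.isOpen_iff.mp hOopen x hxO
    obtain ⟨N, hN⟩ := hdiam ε hεpos
    have hxCN : x ∈ C N := hKmem x hxK N
    obtain ⟨y, hyC, z, hzC, hycomp, hzcomp, hyzne⟩ := hsplit N x hxCN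
    obtain ⟨p, hpK, hpcomp⟩ := hreach (N + 1) y hyC
    obtain ⟨q, hqK, hqcomp⟩ := hreach (N + 1) z hzC
    have hpq : p ≠ q := by
      rintro rfl
      exact hyzne ((connectedComponentIn_eq hpcomp).trans
        (connectedComponentIn_eq hqcomp).symm)
    have hbdd : Bornology.IsBounded (connectedComponentIn (C N) x) :=
      ((hcomp N).isBounded).subset (connectedComponentIn_subset _ _)
    have hxx : x ∈ connectedComponentIn (C N) x := mem_connectedComponentIn hxCN
    have hmemO : ∀ w : X, w ∈ connectedComponentIn (C (N + 1)) w →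
        w ∈ connectedComponentIn (C N) x → w ∈ O := by
      intro w _ hwx
      apply hball
      rw [Metric.mem_ball]
      exact lt_of_le_of_lt (Metric.dist_le_diam_of_mem hbdd hwx hxx) (hN N le_rfl x hxCN)
    have hpx : p ∈ connectedComponentIn (C N) x := by
      have h1 : p ∈ connectedComponentIn (C N) y :=
        connectedComponentIn_mono _ (hnest N) hpcomp
      rwa [connectedComponentIn_eq hycomp]
    have hqx : q ∈ connectedComponentIn (C N) x := by
      have h1 : q ∈ connectedComponentIn (C N) z :=
        connectedComponentIn_mono _ (hnest N) hqcomp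
      rwa [connectedComponentIn_eq hzcomp]
    have hpO : p ∈ O := by
      apply hball
      rw [Metric.mem_ball]
      exact lt_of_le_of_lt (Metric.dist_le_diam_of_mem hbdd hpx hxx) (hN N le_rfl x hxCN)
    have hqO : q ∈ O := by
      apply hball
      rw [Metric.mem_ball]
      exact lt_of_le_of_lt (Metric.dist_le_diam_of_mem hbdd hqx hxx) (hN N le_rfl x hxCN)
    refine ⟨⟨p, hpK⟩, ?_, ⟨q, hqK⟩, ?_, ?_⟩
    · rw [← hOU]; exact hpO
    · rw [← hOU]; exact hqO
    · intro h
      exact hpq (congrArg Subtype.val h)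
  exact AntoineCantorAux.exists_homeo_cantor hperfK
end

section
/- Let X be a regular space and D a shrinkable upper semi-continuous decomposition of X. If every point of X has arbitrarily small neighborhoods satisfying a fixed topological property P (i.e., every neighborhood of every point contains a neighborhood with property P), then every decomposition element of D has arbitrarily small neighborhoods satisfying P. -/
set_option linter.unusedSectionVars false

section Sat
variable {X : Type*} [TopologicalSpace X] (s : Setoid X)

/-- Saturation of a set with respect to the decomposition. -/
def decompSat (A : Set X) : Set X := Quotient.mk s ⁻¹' (Quotient.mk s '' A)

variable {s}

lemma decompSat_mem {A : Set X} {y : X} :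
    y ∈ decompSat s A ↔ ∃ z ∈ A, s.r z y := by
  constructor
  · rintro ⟨z, hz, hq⟩
    exact ⟨z, hz, Quotient.exact hq⟩
  · rintro ⟨z, hz, hr⟩
    exact ⟨z, hz, Quotient.sound hr⟩

lemma subset_decompSat (A : Set X) : A ⊆ decompSat s A :=
  fun y hy => decompSat_mem.2 ⟨y, hy, s.iseqv.refl y⟩

/-- Saturated sets. -/
def decompSaturated (S : Set X) : Prop := ∀ y ∈ S, ∀ z, s.r y z → z ∈ S

lemma decompSat_subset {A S : Set X} (hS : decompSaturated (s := s) S) (hAS : A ⊆ S) :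
    decompSat s A ⊆ S := by
  intro y hy
  obtain ⟨z, hz, hr⟩ := decompSat_mem.1 hy
  exact hS z (hAS hz) y hr

lemma decompSat_saturated (A : Set X) : decompSaturated (s := s) (decompSat s A) := by
  intro y hy z hr
  obtain ⟨w, hw, hwr⟩ := decompSat_mem.1 hy
  exact decompSat_mem.2 ⟨w, hw, s.iseqv.trans hwr hr⟩

lemma decompSat_isClosed (hclosedmap : IsClosedMap (Quotient.mk s)) {A : Set X}
    (hA : IsClosed A) : IsClosed (decompSat s A) :=
  (hclosedmap A hA).preimage continuous_quotient_mk'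

lemma saturated_compl {S : Set X} (hS : decompSaturated (s := s) S) :
    decompSaturated (s := s) Sᶜ := by
  intro y hy z hr hz
  exact hy (hS z hz y (s.iseqv.symm hr))

lemma saturated_inter {S T : Set X} (hS : decompSaturated (s := s) S)
    (hT : decompSaturated (s := s) T) : decompSaturated (s := s) (S ∩ T) :=
  fun y hy z hr => ⟨hS y hy.1 z hr, hT y hy.2 z hr⟩

lemma saturated_class (x : X) : decompSaturated (s := s) {y : X | s.r x y} :=
  fun y hy z hr => s.iseqv.trans hy hr

/-- A saturated open set between a saturated set and an open superset. -/
lemma exists_saturated_open_between (hclosedmap : IsClosedMap (Quotient.mk s))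
    {S O : Set X} (hS : decompSaturated (s := s) S) (hO : IsOpen O) (hSO : S ⊆ O) :
    ∃ U : Set X, IsOpen U ∧ decompSaturated (s := s) U ∧ S ⊆ U ∧ U ⊆ O := by
  refine ⟨(decompSat s Oᶜ)ᶜ, (decompSat_isClosed hclosedmap hO.isClosed_compl).isOpen_compl,
    saturated_compl (decompSat_saturated _), ?_, ?_⟩
  · intro y hy hmem
    obtain ⟨z, hz, hr⟩ := decompSat_mem.1 hmem
    exact hz (hSO (hS y hy z (s.iseqv.symm hr)))
  · intro y hy
    by_contra h
    exact hy (subset_decompSat _ h)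

end Sat

/-- Let `X` be a regular space and `s` a shrinkable upper semi-continuous decomposition
of `X`. If every point of `X` has arbitrarily small neighborhoods satisfying a fixed
topological (homeomorphism-invariant) property `P`, then every decomposition element
has arbitrarily small neighborhoods satisfying `P`. -/
theorem decomposition_elements_small_nbhds {X : Type*} [TopologicalSpace X]
    [RegularSpace X] (s : Setoid X)
    (hclosed : ∀ x : X, IsClosed {y : X | s.r x y})
    (hcompact : ∀ x : X, IsCompact {y : X | s.r x y})
    (hclosedmap : IsClosedMap (Quotient.mk s))
    -- shrinkability: for every open cover 𝒱 and every saturated open cover 𝒰 there is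
    -- a homeomorphism shrinking each element into a member of 𝒱 and 𝒰-close to `id`
    (hshrink : ∀ 𝒱 𝒰 : Set (Set X),
      (∀ V ∈ 𝒱, IsOpen V) → ⋃₀ 𝒱 = Set.univ →
      (∀ U ∈ 𝒰, IsOpen U) → ⋃₀ 𝒰 = Set.univ →
      (∀ U ∈ 𝒰, ∀ x ∈ U, {y : X | s.r x y} ⊆ U) →
      ∃ h : X ≃ₜ X,
        (∀ x : X, ∃ V ∈ 𝒱, h '' {y : X | s.r x y} ⊆ V) ∧
        (∀ x : X, ∃ U ∈ 𝒰, x ∈ U ∧ h x ∈ U))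
    (P : Set X → Prop)
    (hP : ∀ (h : X ≃ₜ X) (A : Set X), P A → P (h ⁻¹' A))
    (hsmall : ∀ x : X, ∀ U : Set X, IsOpen U → x ∈ U →
      ∃ N : Set X, IsOpen N ∧ x ∈ N ∧ N ⊆ U ∧ P N) :
    ∀ x : X, ∀ W : Set X, IsOpen W → {y : X | s.r x y} ⊆ W →
      ∃ N : Set X, IsOpen N ∧ {y : X | s.r x y} ⊆ N ∧ N ⊆ W ∧ P N := by
  intro x W hW hDW
  set D : Set X := {y : X | s.r x y} with hD
  have hxD : x ∈ D := s.iseqv.refl x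
  have hDsat : decompSaturated (s := s) D := saturated_class x
  -- U₀ : saturated open, D ⊆ U₀ ⊆ W
  obtain ⟨U₀, hU₀o, hU₀sat, hDU₀, hU₀W⟩ :=
    exists_saturated_open_between hclosedmap hDsat hW hDW
  -- G₀ : open, D ⊆ G₀, closure G₀ ⊆ U₀
  obtain ⟨G₀, hG₀o, hDG₀, hclG₀⟩ :=
    (hcompact x).exists_isOpen_closure_subset (hU₀o.mem_nhdsSet.2 hDU₀)
  -- K : saturated closed, closure G₀ ⊆ K ⊆ U₀
  set K : Set X := decompSat s (closure G₀) with hK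
  have hKc : IsClosed K := decompSat_isClosed hclosedmap isClosed_closure
  have hKsat : decompSaturated (s := s) K := decompSat_saturated _
  have hclG₀K : closure G₀ ⊆ K := subset_decompSat _
  have hKU₀ : K ⊆ U₀ := decompSat_subset hU₀sat hclG₀
  -- G₁ : open, D ⊆ G₁, closure G₁ ⊆ G₀
  obtain ⟨G₁, hG₁o, hDG₁, hclG₁⟩ :=
    (hcompact x).exists_isOpen_closure_subset (hG₀o.mem_nhdsSet.2 hDG₀)
  -- U₁ : saturated open, D ⊆ U₁ ⊆ G₁
  obtain ⟨U₁, hU₁o, hU₁sat, hDU₁, hU₁G₁⟩ :=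
    exists_saturated_open_between hclosedmap hDsat hG₁o hDG₁
  have hclU₁ : closure U₁ ⊆ G₀ := (closure_mono hU₁G₁).trans hclG₁
  -- G₂ : open, D ⊆ G₂, closure G₂ ⊆ U₁ ; K' := sat (closure G₂)
  obtain ⟨G₂, hG₂o, hDG₂, hclG₂⟩ :=
    (hcompact x).exists_isOpen_closure_subset (hU₁o.mem_nhdsSet.2 hDU₁)
  set K' : Set X := decompSat s (closure G₂) with hK'
  have hK'c : IsClosed K' := decompSat_isClosed hclosedmap isClosed_closure
  have hK'sat : decompSaturated (s := s) K' := decompSat_saturated _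
  have hDK' : D ⊆ K' := hDG₂.trans (subset_closure.trans (subset_decompSat _))
  have hK'U₁ : K' ⊆ U₁ := decompSat_subset hU₁sat hclG₂
  -- the covers
  set 𝒰 : Set (Set X) := {U₁, U₀ ∩ K'ᶜ, Kᶜ} with h𝒰
  set 𝒱 : Set (Set X) :=
    {V | IsOpen V ∧ P V ∧ (V ⊆ G₀ ∨ V ⊆ (closure U₁)ᶜ)} with h𝒱
  have h𝒱open : ∀ V ∈ 𝒱, IsOpen V := fun V hV => hV.1
  have h𝒱cover : ⋃₀ 𝒱 = Set.univ := by
    apply Set.eq_univ_of_forall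
    intro y
    by_cases hy : y ∈ G₀
    · obtain ⟨N, hNo, hyN, hNsub, hNP⟩ := hsmall y G₀ hG₀o hy
      exact ⟨N, ⟨hNo, hNP, Or.inl hNsub⟩, hyN⟩
    · have hy' : y ∈ (closure U₁)ᶜ := fun hc => hy (hclU₁ hc)
      obtain ⟨N, hNo, hyN, hNsub, hNP⟩ :=
        hsmall y (closure U₁)ᶜ isClosed_closure.isOpen_compl hy'
      exact ⟨N, ⟨hNo, hNP, Or.inr hNsub⟩, hyN⟩
  have h𝒰open : ∀ U ∈ 𝒰, IsOpen U := by
    rintro U (rfl | rfl | rfl)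
    · exact hU₁o
    · exact hU₀o.inter hK'c.isOpen_compl
    · exact hKc.isOpen_compl
  have h𝒰cover : ⋃₀ 𝒰 = Set.univ := by
    apply Set.eq_univ_of_forall
    intro y
    by_cases hyK : y ∈ K
    · by_cases hyK' : y ∈ K'
      · exact ⟨U₁, Or.inl rfl, hK'U₁ hyK'⟩
      · exact ⟨U₀ ∩ K'ᶜ, Or.inr (Or.inl rfl), hKU₀ hyK, hyK'⟩
    · exact ⟨Kᶜ, Or.inr (Or.inr rfl), hyK⟩
  have h𝒰sat : ∀ U ∈ 𝒰, ∀ z ∈ U, {y : X | s.r z y} ⊆ U := by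
    have : ∀ U ∈ 𝒰, decompSaturated (s := s) U := by
      rintro U (rfl | rfl | rfl)
      · exact hU₁sat
      · exact saturated_inter hU₀sat (saturated_compl hK'sat)
      · exact saturated_compl hKsat
    intro U hU z hz y hy
    exact this U hU z hz y hy
  obtain ⟨h, hhV, hhU⟩ := hshrink 𝒱 𝒰 h𝒱open h𝒱cover h𝒰open h𝒰cover h𝒰sat
  -- h x ∈ U₁
  have hhx : h x ∈ U₁ := by
    obtain ⟨U, hU, hxU, hhxU⟩ := hhU x
    rcases hU with rfl | rfl | rfl
    · exact hhxU
    · exact absurd (hDK' hxD) hxU.2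
    · exact absurd (hclG₀K (subset_closure (hDG₀ hxD))) hxU
  -- the small set V containing h(D)
  obtain ⟨V, hV𝒱, hhDV⟩ := hhV x
  have hVG₀ : V ⊆ G₀ := by
    rcases hV𝒱.2.2 with h1 | h1
    · exact h1
    · exact absurd (subset_closure hhx)
        (h1 (hhDV ⟨x, hxD, rfl⟩))
  refine ⟨h ⁻¹' V, hV𝒱.1.preimage h.continuous, ?_, ?_, hP h V hV𝒱.2.1⟩
  · intro y hy
    exact hhDV ⟨y, hy, rfl⟩
  · -- h ⁻¹' V ⊆ W
    intro y hy
    have hhyK : h y ∈ K := hclG₀K (subset_closure (hVG₀ hy))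
    obtain ⟨U, hU, hyU, hhyU⟩ := hhU y
    rcases hU with rfl | rfl | rfl
    · exact hU₀W (hU₁G₁.trans (subset_closure.trans hclG₁) |>.trans
        (subset_closure.trans hclG₀) hyU)
    · exact hU₀W hyU.1
    · exact absurd hhyK hhyU
end
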